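/- arXiv:1410.5249 — 4 statements merged into one kernel-verified Lean document; each statement's English description precedes it below -/
import Mathlib

section
/- Let p be a prime and R a perfect 𝔽_p-algebra (commutative ring of characteristic p with bijective Frobenius). Let 𝔽_pR denote the monoid algebra over 𝔽_p of the multiplicative monoid of R, let π̄ : 𝔽_pR → R be the ring homomorphism sending each basis element [r] to r, and let λ : ℤR → 𝕎(𝔽_pR) be the ring homomorphism determined by λ([r]) = ⟨[r]⟩, the Teichmüller representative of the basis element [r] ∈ 𝔽_pR. Then λ is injective, and ⋂_{n ≥ 1} I^n = λ^{-1}( ker( 𝕎(π̄) : 𝕎(𝔽_pR) → 𝕎(R) ) ). -/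
noncomputable section

/-- The canonical projection `ℤR → R` from the monoid algebra of the
multiplicative monoid of `R`, sending `[r]` to `r`. -/
def piHom (R : Type*) [CommRing R] : MonoidAlgebra ℤ R →+* R :=
  (MonoidAlgebra.lift ℤ R R (MonoidHom.id R)).toRingHom

/-- `I = ker (ℤR → R)`. -/
def Iideal (R : Type*) [CommRing R] : Ideal (MonoidAlgebra ℤ R) :=
  RingHom.ker (piHom R)

/-- The canonical projection `π̄ : 𝔽_pR → R` from the monoid algebra over
`𝔽_p` of the multiplicative monoid of `R`, sending `[r]` to `r`. -/
def piBar (p : ℕ) (R : Type*) [CommRing R] [CharP R p] :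
    MonoidAlgebra (ZMod p) R →+* R :=
  letI : Algebra (ZMod p) R := ZMod.algebra R p
  (MonoidAlgebra.lift (ZMod p) R R (MonoidHom.id R)).toRingHom

/-- The ring homomorphism `λ : ℤR → 𝕎(𝔽_pR)` with `λ [r] = ⟨[r]⟩`, the
Teichmüller representative of the basis element `[r] ∈ 𝔽_pR`. -/
def lamHom (p : ℕ) [Fact p.Prime] (R : Type*) [CommRing R] :
    MonoidAlgebra ℤ R →+* WittVector p (MonoidAlgebra (ZMod p) R) :=
  (MonoidAlgebra.lift ℤ (WittVector p (MonoidAlgebra (ZMod p) R)) R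
    ((WittVector.teichmuller p).comp (MonoidAlgebra.of (ZMod p) R))).toRingHom

set_option linter.unusedSectionVars false
set_option maxHeartbeats 1000000

section WittLemmas

variable {p : ℕ} [hp : Fact p.Prime] {S : Type*} [CommRing S] [CharP S p]

lemma wv_verschiebung_inj :
    Function.Injective (WittVector.verschiebung : WittVector p S → WittVector p S) := by
  intro x y h
  ext n
  have := congrArg (fun z => WittVector.coeff z (n + 1)) h
  simpa [WittVector.verschiebung_coeff_succ] using this

lemma wv_p_mul_eq_zero [PerfectRing S p] {x : WittVector p S}
    (h : (p : WittVector p S) * x = 0) : x = 0 := by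
  have h1 : WittVector.verschiebung (WittVector.frobenius x) = 0 := by
    rw [WittVector.verschiebung_frobenius, mul_comm, h]
  have h2 : WittVector.frobenius x = WittVector.frobenius (0 : WittVector p S) := by
    rw [map_zero]
    exact wv_verschiebung_inj (by simpa using h1)
  exact (WittVector.frobenius_bijective p S).injective h2

lemma wv_p_pow_mul_eq_zero [PerfectRing S p] {n : ℕ} {x : WittVector p S}
    (h : (p : WittVector p S) ^ n * x = 0) : x = 0 := by
  induction n with
  | zero => simpa using h
  | succ n ih =>
    have h2 : (p : WittVector p S) * ((p : WittVector p S) ^ n * x) = 0 := by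
      rw [← h]; ring
    exact ih (wv_p_mul_eq_zero h2)

lemma wv_coeff_p_pow_mul (n : ℕ) (y : WittVector p S) {i : ℕ} (hi : i < n) :
    ((p : WittVector p S) ^ n * y).coeff i = 0 := by
  induction n generalizing y i with
  | zero => omega
  | succ n ih =>
    have hrw : (p : WittVector p S) ^ (n + 1) * y = ((p : WittVector p S) ^ n * y) * p := by ring
    rw [hrw]
    cases i with
    | zero => exact WittVector.mul_charP_coeff_zero _
    | succ i =>
      rw [WittVector.mul_charP_coeff_succ]
      rw [ih y (by omega)]
      exact zero_pow hp.out.ne_zero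

lemma wv_exists_p_pow_mul [PerfectRing S p] (n : ℕ) (x : WittVector p S)
    (h : ∀ i < n, x.coeff i = 0) : ∃ y, x = (p : WittVector p S) ^ n * y := by
  induction n generalizing x with
  | zero => exact ⟨x, by simp⟩
  | succ n ih =>
    set z : WittVector p S := WittVector.mk p (fun i => x.coeff (i + 1)) with hz
    have hxz : x = WittVector.verschiebung z := by
      ext i
      cases i with
      | zero => rw [WittVector.verschiebung_coeff_zero]; exact h 0 (by omega)
      | succ i => rw [WittVector.verschiebung_coeff_succ, hz, WittVector.coeff_mk]
    set w : WittVector p S := (WittVector.frobeniusEquiv p S).symm z with hw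
    have hfw : WittVector.frobenius w = z := by
      have := (WittVector.frobeniusEquiv p S).apply_symm_apply z
      exact this
    have hxw : x = w * p := by
      rw [hxz, ← hfw, WittVector.verschiebung_frobenius]
    have hwc : ∀ i < n, w.coeff i = 0 := by
      intro i hi
      have h1 : (WittVector.frobenius w).coeff i = 0 := by
        rw [hfw, hz, WittVector.coeff_mk]
        exact h (i + 1) (by omega)
      rw [WittVector.coeff_frobenius_charP] at h1
      have : _root_.frobenius S p (w.coeff i) = _root_.frobenius S p 0 := by
        simpa [frobenius_def, zero_pow hp.out.ne_zero] using h1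
      exact PerfectRing.bijective_frobenius.injective this
    obtain ⟨y, hy⟩ := ih w hwc
    exact ⟨y, by rw [hxw, hy]; ring⟩

end WittLemmas

section AlgLemmas

variable (p : ℕ) [hp : Fact p.Prime] (R : Type*) [CommRing R] [CharP R p]

local notation "ZR" => MonoidAlgebra ℤ R
local notation "J" => Iideal R ^ 2 ⊔ Ideal.span {(p : MonoidAlgebra ℤ R)}

lemma piHom_of (r : R) : piHom R (MonoidAlgebra.of ℤ R r) = r := by
  simp [piHom]

lemma zr_hom_ext {S : Type*} [Ring S] {f g : MonoidAlgebra ℤ R →+* S}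
    (h : ∀ r : R, f (MonoidAlgebra.of ℤ R r) = g (MonoidAlgebra.of ℤ R r)) : f = g := by
  apply MonoidAlgebra.ringHom_ext
  · intro b
    have hb : (MonoidAlgebra.single (1 : R) b : ZR) = ((b : ℤ) : ZR) :=
      (eq_intCast (MonoidAlgebra.singleOneRingHom : ℤ →+* ZR) b).symm
    rw [hb, map_intCast, map_intCast]
  · intro a
    simpa [MonoidAlgebra.of_apply] using h a

lemma p_mem_I : (p : ZR) ∈ Iideal R := by
  rw [Iideal, RingHom.mem_ker, map_natCast]
  exact CharP.cast_eq_zero R p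

lemma sub_of_pi_mem_I (x : ZR) : x - MonoidAlgebra.of ℤ R (piHom R x) ∈ Iideal R := by
  rw [Iideal, RingHom.mem_ker, map_sub, piHom_of, sub_self]

lemma of_zero_mem_pow (n : ℕ) (hn : n ≠ 0) : MonoidAlgebra.of ℤ R (0 : R) ∈ Iideal R ^ n := by
  have h0 : MonoidAlgebra.of ℤ R (0 : R) ∈ Iideal R := by
    rw [Iideal, RingHom.mem_ker, piHom_of]
  have : MonoidAlgebra.of ℤ R (0 : R) = (MonoidAlgebra.of ℤ R (0 : R)) ^ n := by
    rw [← map_pow, zero_pow hn]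
  rw [this]
  exact Ideal.pow_mem_pow h0 n

lemma u_mem_J (hs : Function.Surjective fun x : R => x ^ p) (r s : R) :
    MonoidAlgebra.of ℤ R r + MonoidAlgebra.of ℤ R s - MonoidAlgebra.of ℤ R (r + s) ∈ J := by
  obtain ⟨a, ha⟩ := hs r
  obtain ⟨b, hb⟩ := hs s
  simp only at ha hb
  set A := MonoidAlgebra.of ℤ R a with hA
  set B := MonoidAlgebra.of ℤ R b with hB
  set C := MonoidAlgebra.of ℤ R (a + b) with hC
  have hu : A + B - C ∈ Iideal R := by
    rw [Iideal, RingHom.mem_ker, map_sub, map_add, hA, hB, hC, piHom_of, piHom_of, piHom_of,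
      sub_self]
  set u : ZR := A + B - C with hu'
  obtain ⟨r₁, hr₁⟩ := exists_add_pow_prime_eq hp.out A B
  obtain ⟨r₂, hr₂⟩ := exists_add_pow_prime_eq hp.out C u
  have hCu : C + u = A + B := by rw [hu']; ring
  have hors : MonoidAlgebra.of ℤ R r + MonoidAlgebra.of ℤ R s - MonoidAlgebra.of ℤ R (r + s)
      = A ^ p + B ^ p - C ^ p := by
    rw [hA, hB, hC, ← map_pow, ← map_pow, ← map_pow, ha, hb, add_pow_char, ha, hb]
  have key : A ^ p + B ^ p - C ^ p = u ^ p + (p : ZR) * (C * u * r₂ - A * B * r₁) := by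
    have h1 : A ^ p + B ^ p + (p : ZR) * A * B * r₁ = C ^ p + u ^ p + (p : ZR) * C * u * r₂ := by
      rw [← hr₁, ← hr₂, hCu]
    linear_combination h1
  rw [hors, key]
  refine add_mem (Submodule.mem_sup_left ?_) (Submodule.mem_sup_right ?_)
  · have : u ^ p ∈ Iideal R ^ p := Ideal.pow_mem_pow hu p
    exact Ideal.pow_le_pow_right hp.out.two_le this
  · exact Ideal.mem_span_singleton.mpr ⟨C * u * r₂ - A * B * r₁, rfl⟩

lemma of_zero_mem_J : MonoidAlgebra.of ℤ R (0 : R) ∈ J :=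
  Submodule.mem_sup_left (of_zero_mem_pow R 2 (by norm_num))

lemma zsmul_of_mem_J (hs : Function.Surjective fun x : R => x ^ p) (b : ℤ) (r : R) :
    (b : ZR) * MonoidAlgebra.of ℤ R r - MonoidAlgebra.of ℤ R (b • r) ∈ J := by
  induction b using Int.induction_on with
  | zero =>
    simpa using neg_mem (of_zero_mem_J p R)
  | succ n ihn =>
    have key : ((n : ℤ) + 1 : ℤ) • r = (n : ℤ) • r + r := by
      rw [add_smul, one_smul]
    have expand : ((((n : ℤ) + 1 : ℤ) : ZR) * MonoidAlgebra.of ℤ R r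
        - MonoidAlgebra.of ℤ R (((n : ℤ) + 1 : ℤ) • r))
        = (((n : ℤ) : ZR) * MonoidAlgebra.of ℤ R r - MonoidAlgebra.of ℤ R ((n : ℤ) • r))
          + (MonoidAlgebra.of ℤ R ((n : ℤ) • r) + MonoidAlgebra.of ℤ R r
              - MonoidAlgebra.of ℤ R ((n : ℤ) • r + r)) := by
      rw [key]
      push_cast
      ring
    rw [expand]
    exact add_mem ihn (u_mem_J p R hs _ _)
  | pred n ihn =>
    have key : (-(n : ℤ) - 1 : ℤ) • r = -(n : ℤ) • r - r := by
      rw [sub_smul, one_smul]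
    have expand : (((-(n : ℤ) - 1 : ℤ) : ZR) * MonoidAlgebra.of ℤ R r
        - MonoidAlgebra.of ℤ R ((-(n : ℤ) - 1 : ℤ) • r))
        = (((-(n : ℤ) : ℤ) : ZR) * MonoidAlgebra.of ℤ R r - MonoidAlgebra.of ℤ R ((-(n : ℤ)) • r))
          - (MonoidAlgebra.of ℤ R ((-(n : ℤ)) • r - r) + MonoidAlgebra.of ℤ R r
              - MonoidAlgebra.of ℤ R (((-(n : ℤ)) • r - r) + r)) := by
      rw [key]
      have : (-(n : ℤ)) • r - r + r = (-(n : ℤ)) • r := by ring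
      rw [this]
      push_cast
      ring
    rw [expand]
    exact sub_mem ihn (u_mem_J p R hs _ _)

lemma red_mem_J (hs : Function.Surjective fun x : R => x ^ p) (x : ZR) :
    x - MonoidAlgebra.of ℤ R (piHom R x) ∈ J := by
  induction x using MonoidAlgebra.induction_on with
  | of g => rw [piHom_of, sub_self]; exact zero_mem _
  | add f g hf hg =>
    have expand : (f + g) - MonoidAlgebra.of ℤ R (piHom R (f + g))
        = (f - MonoidAlgebra.of ℤ R (piHom R f)) + (g - MonoidAlgebra.of ℤ R (piHom R g))
          + (MonoidAlgebra.of ℤ R (piHom R f) + MonoidAlgebra.of ℤ R (piHom R g)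
              - MonoidAlgebra.of ℤ R (piHom R f + piHom R g)) := by
      rw [map_add]
      ring
    rw [expand]
    exact add_mem (add_mem hf hg) (u_mem_J p R hs _ _)
  | smul b f hf =>
    have h1 : (b • f : ZR) = (b : ZR) * f := by
      rw [zsmul_eq_mul]
    have h2 : piHom R (b • f) = b • piHom R f := map_zsmul (piHom R) b f
    have expand : (b • f : ZR) - MonoidAlgebra.of ℤ R (piHom R (b • f))
        = (b : ZR) * (f - MonoidAlgebra.of ℤ R (piHom R f))
          + (((b : ℤ) : ZR) * MonoidAlgebra.of ℤ R (piHom R f)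
              - MonoidAlgebra.of ℤ R (b • piHom R f)) := by
      rw [h2, h1]
      ring
    rw [expand]
    exact add_mem (Ideal.mul_mem_left _ _ hf) (zsmul_of_mem_J p R hs b _)

lemma I_le_J (hs : Function.Surjective fun x : R => x ^ p) : Iideal R ≤ J := by
  intro x hx
  have h1 := red_mem_J p R hs x
  have h2 : piHom R x = 0 := hx
  rw [h2] at h1
  have : x = (x - MonoidAlgebra.of ℤ R (0 : R)) + MonoidAlgebra.of ℤ R (0 : R) := by ring
  rw [this]
  exact add_mem h1 (of_zero_mem_J p R)

lemma pow_chain (hs : Function.Surjective fun x : R => x ^ p) (n : ℕ) :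
    Iideal R ^ (n + 1) ≤ Iideal R ^ (n + 2) ⊔ Ideal.span {(p : ZR) ^ (n + 1)} := by
  induction n with
  | zero => simpa [pow_one] using I_le_J p R hs
  | succ n ih =>
    have step1 : Iideal R ^ (n + 2) = Iideal R ^ (n + 1) * Iideal R := pow_succ _ _
    have step2 : Iideal R ^ (n + 1) * Iideal R
        ≤ (Iideal R ^ (n + 2) ⊔ Ideal.span {(p : ZR) ^ (n + 1)}) * Iideal R :=
      Ideal.mul_mono_left ih
    have step3 : (Iideal R ^ (n + 2) ⊔ Ideal.span {(p : ZR) ^ (n + 1)}) * Iideal R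
        = Iideal R ^ (n + 2) * Iideal R ⊔ Ideal.span {(p : ZR) ^ (n + 1)} * Iideal R :=
      Ideal.sup_mul _ _ _
    have step4a : Iideal R ^ (n + 2) * Iideal R ≤ Iideal R ^ (n + 3) := le_of_eq (pow_succ _ _).symm
    have step4b : Ideal.span {(p : ZR) ^ (n + 1)} * Iideal R
        ≤ Iideal R ^ (n + 3) ⊔ Ideal.span {(p : ZR) ^ (n + 2)} := by
      have hb1 : Ideal.span {(p : ZR) ^ (n + 1)} * Iideal R
          ≤ Ideal.span {(p : ZR) ^ (n + 1)} * (Iideal R ^ 2 ⊔ Ideal.span {(p : ZR)}) :=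
        Ideal.mul_mono_right (I_le_J p R hs)
      have hb2 : Ideal.span {(p : ZR) ^ (n + 1)} * (Iideal R ^ 2 ⊔ Ideal.span {(p : ZR)})
          = Ideal.span {(p : ZR) ^ (n + 1)} * Iideal R ^ 2
            ⊔ Ideal.span {(p : ZR) ^ (n + 1)} * Ideal.span {(p : ZR)} := Ideal.mul_sup _ _ _
      have hb3 : Ideal.span {(p : ZR) ^ (n + 1)} * Iideal R ^ 2 ≤ Iideal R ^ (n + 3) := by
        have hspan : Ideal.span {(p : ZR) ^ (n + 1)} ≤ Iideal R ^ (n + 1) := by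
          rw [Ideal.span_le, Set.singleton_subset_iff]
          exact Ideal.pow_mem_pow (p_mem_I p R) _
        calc Ideal.span {(p : ZR) ^ (n + 1)} * Iideal R ^ 2
            ≤ Iideal R ^ (n + 1) * Iideal R ^ 2 := Ideal.mul_mono_left hspan
          _ = Iideal R ^ (n + 3) := (pow_add _ _ _).symm
      have hb4 : Ideal.span {(p : ZR) ^ (n + 1)} * Ideal.span {(p : ZR)}
          = Ideal.span {(p : ZR) ^ (n + 2)} := by
        rw [Ideal.span_singleton_mul_span_singleton, ← pow_succ]
      refine le_trans hb1 (le_of_eq hb2 |>.trans (sup_le ?_ ?_))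
      · exact le_trans hb3 le_sup_left
      · rw [hb4]; exact le_sup_right
    calc Iideal R ^ (n + 2) = Iideal R ^ (n + 1) * Iideal R := step1
      _ ≤ _ := step2
      _ = _ := step3
      _ ≤ Iideal R ^ (n + 3) ⊔ Ideal.span {(p : ZR) ^ (n + 2)} := by
          refine sup_le (le_trans step4a le_sup_left) step4b

lemma decompose (hs : Function.Surjective fun x : R => x ^ p) (n : ℕ) {x : ZR}
    (hx : x ∈ Iideal R ^ (n + 1)) :
    ∃ (t : R) (y : ZR), y ∈ Iideal R ^ (n + 2)
      ∧ x = (p : ZR) ^ (n + 1) * MonoidAlgebra.of ℤ R t + y := by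
  have hmem := pow_chain p R hs n hx
  rw [Submodule.mem_sup] at hmem
  obtain ⟨y₀, hy₀, w, hw, hsum⟩ := hmem
  rw [Ideal.mem_span_singleton] at hw
  obtain ⟨z, hz⟩ := hw
  refine ⟨piHom R z,
    y₀ + (p : ZR) ^ (n + 1) * (z - MonoidAlgebra.of ℤ R (piHom R z)), ?_, ?_⟩
  · refine add_mem hy₀ ?_
    have h1 : (p : ZR) ^ (n + 1) ∈ Iideal R ^ (n + 1) := Ideal.pow_mem_pow (p_mem_I p R) _
    have h2 := Ideal.mul_mem_mul h1 (sub_of_pi_mem_I R z)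
    rwa [← pow_succ] at h2
  · rw [← hsum, hz]
    ring

end AlgLemmas

section Perf

variable (p : ℕ) [hp : Fact p.Prime] (R : Type*) [CommRing R] [CharP R p]

instance charP_A : CharP (MonoidAlgebra (ZMod p) R) p := by
  have hinj : Function.Injective (MonoidAlgebra.singleOneRingHom :
      ZMod p →+* MonoidAlgebra (ZMod p) R) := fun a b h => by
    simpa [MonoidAlgebra.single_right_inj] using h
  exact charP_of_injective_ringHom hinj p

lemma perfect_R (hperfect : Function.Bijective fun x : R => x ^ p) : PerfectRing R p := by
  constructor
  have : (frobenius R p : R → R) = fun x => x ^ p := funext fun x => frobenius_def p x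
  exact hperfect

lemma perfect_A (hperfect : Function.Bijective fun x : R => x ^ p) :
    PerfectRing (MonoidAlgebra (ZMod p) R) p := by
  constructor
  have hhom : (frobenius (MonoidAlgebra (ZMod p) R) p)
      = MonoidAlgebra.mapDomainRingHom (ZMod p) (powMonoidHom p : R →* R) := by
    apply MonoidAlgebra.ringHom_ext
    · intro b
      rw [show (frobenius (MonoidAlgebra (ZMod p) R) p) (MonoidAlgebra.single 1 b)
          = (MonoidAlgebra.single (1 : R) b) ^ p from frobenius_def p _]
      rw [MonoidAlgebra.single_pow, one_pow, ZMod.pow_card]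
      show _ = MonoidAlgebra.mapDomain _ _
      rw [MonoidAlgebra.mapDomain_single]
      norm_num
    · intro a
      rw [show (frobenius (MonoidAlgebra (ZMod p) R) p) (MonoidAlgebra.single a 1)
          = (MonoidAlgebra.single a (1 : ZMod p)) ^ p from frobenius_def p _]
      rw [MonoidAlgebra.single_pow, one_pow]
      show _ = MonoidAlgebra.mapDomain _ _
      rw [MonoidAlgebra.mapDomain_single]
      rfl
  have hfun : (fun x : MonoidAlgebra (ZMod p) R => x ^ p)
      = MonoidAlgebra.mapDomain (fun x : R => x ^ p) := by
    funext x
    rw [← frobenius_def, hhom]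
    rfl
  rw [hfun]
  set e : R ≃ R := Equiv.ofBijective _ hperfect with he
  have : MonoidAlgebra.mapDomain (fun x : R => x ^ p)
      = ⇑(MonoidAlgebra.mapDomainAddEquiv (ZMod p) e) := by
    funext l
    rfl
  rw [this]
  exact (MonoidAlgebra.mapDomainAddEquiv (ZMod p) e).toEquiv.bijective

end Perf

section Mu

variable (p : ℕ) [hp : Fact p.Prime] (R : Type*) [CommRing R] [CharP R p]

local notation "ZR" => MonoidAlgebra ℤ R
local notation "Ap" => MonoidAlgebra (ZMod p) R

lemma lam_of (r : R) : lamHom p R (MonoidAlgebra.of ℤ R r)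
    = WittVector.teichmuller p (MonoidAlgebra.of (ZMod p) R r) := by
  simp [lamHom]

lemma piBar_of (r : R) : piBar p R (MonoidAlgebra.of (ZMod p) R r) = r := by
  letI : Algebra (ZMod p) R := ZMod.algebra R p
  have h : piBar p R (MonoidAlgebra.of (ZMod p) R r) = (1 : ZMod p) • r := by
    simp [piBar]
  rw [h, one_smul]

/-- `μ = 𝕎(π̄) ∘ λ : ℤR → 𝕎 R`, sending `[r]` to the Teichmüller lift of `r`. -/
def muHom : MonoidAlgebra ℤ R →+* WittVector p R :=
  (WittVector.map (piBar p R)).comp (lamHom p R)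

lemma mu_of (r : R) : muHom p R (MonoidAlgebra.of ℤ R r) = WittVector.teichmuller p r := by
  rw [muHom, RingHom.comp_apply, lam_of, WittVector.map_teichmuller, piBar_of]

lemma cc_mu (x : ZR) : (muHom p R x).coeff 0 = piHom R x := by
  have h : (WittVector.constantCoeff).comp (muHom p R) = piHom R := by
    apply zr_hom_ext
    intro r
    rw [RingHom.comp_apply, mu_of, piHom_of]
    simp [WittVector.constantCoeff_apply, WittVector.teichmuller_coeff_zero]
  exact DFunLike.congr_fun h x

/-- The coefficient-reduction homomorphism `ℤR → 𝔽_pR`. -/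
def nuHom : MonoidAlgebra ℤ R →+* MonoidAlgebra (ZMod p) R :=
  (MonoidAlgebra.lift ℤ (MonoidAlgebra (ZMod p) R) R (MonoidAlgebra.of (ZMod p) R)).toRingHom

lemma nu_of (r : R) : nuHom p R (MonoidAlgebra.of ℤ R r) = MonoidAlgebra.of (ZMod p) R r := by
  simp [nuHom]

lemma cc_lam (x : ZR) : (lamHom p R x).coeff 0 = nuHom p R x := by
  have h : (WittVector.constantCoeff).comp (lamHom p R) = nuHom p R := by
    apply zr_hom_ext
    intro r
    rw [RingHom.comp_apply, lam_of, nu_of]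
    simp [WittVector.constantCoeff_apply, WittVector.teichmuller_coeff_zero]
  exact DFunLike.congr_fun h x

lemma nu_apply (x : ZR) :
    (nuHom p R x).coeff = Finsupp.mapRange (fun a : ℤ => (a : ZMod p)) (by norm_num) x.coeff := by
  induction x using MonoidAlgebra.induction_linear with
  | zero => simp
  | add f g hf hg =>
    rw [map_add, MonoidAlgebra.coeff_add, MonoidAlgebra.coeff_add, hf, hg,
      Finsupp.mapRange_add (by push_cast; simp)]
  | single r b =>
    have h1 : (MonoidAlgebra.single r b : ZR) = b • MonoidAlgebra.of ℤ R r := by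
      rw [MonoidAlgebra.of_apply, MonoidAlgebra.smul_single', mul_one]
    have h2 : nuHom p R (MonoidAlgebra.single r b) = b • MonoidAlgebra.of (ZMod p) R r := by
      rw [h1, map_zsmul, nu_of]
    rw [h2, MonoidAlgebra.coeff_single, Finsupp.mapRange_single, MonoidAlgebra.of_apply]
    rw [show (b • MonoidAlgebra.single r (1 : ZMod p) : Ap)
        = MonoidAlgebra.single r (b • (1 : ZMod p)) from MonoidAlgebra.smul_single b r 1]
    rw [Int.smul_one_eq_cast, MonoidAlgebra.coeff_single]

lemma lam_ker_dvd (x : ZR) (hx : lamHom p R x = 0) :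
    ∃ z : ZR, x = (p : ZR) * z := by
  have hnu : nuHom p R x = 0 := by
    rw [← cc_lam, hx]
    simp
  rw [← MonoidAlgebra.coeff_eq_zero, nu_apply] at hnu
  set x' : R →₀ ℤ := x.coeff with hx'
  have hnu' : (Finsupp.mapRange (fun a : ℤ => (a : ZMod p)) (by norm_num) x' : R →₀ ZMod p)
      = 0 := hnu
  have hdvd : ∀ r : R, (p : ℤ) ∣ x' r := by
    intro r
    have h1 := DFunLike.congr_fun hnu' r
    rw [Finsupp.mapRange_apply] at h1
    exact (ZMod.intCast_zmod_eq_zero_iff_dvd _ p).mp h1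
  refine ⟨MonoidAlgebra.ofCoeff (Finsupp.mapRange (fun a : ℤ => a / p) (by simp) x'), ?_⟩
  have hp1 : (p : ZR) = MonoidAlgebra.single (1 : R) ((p : ℕ) : ℤ) := by
    rw [show (MonoidAlgebra.single (1 : R) ((p : ℕ) : ℤ) : ZR)
        = MonoidAlgebra.singleOneRingHom ((p : ℕ) : ℤ) from rfl, map_natCast]
  rw [hp1]
  apply MonoidAlgebra.ext
  apply Finsupp.ext
  intro r
  rw [MonoidAlgebra.coeff_single_one_mul, MonoidAlgebra.coeff_ofCoeff, Finsupp.mapRange_apply]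
  exact (Int.mul_ediv_cancel' (hdvd r)).symm

end Mu

/-- For a perfect `𝔽_p`-algebra `R`, the map `λ : ℤR → 𝕎(𝔽_pR)` is injective
and `⋂_{n ≥ 1} I^n = λ⁻¹(ker(𝕎(π̄) : 𝕎(𝔽_pR) → 𝕎 R))`. -/
theorem statement14 (p : ℕ) [Fact p.Prime] (R : Type*) [CommRing R] [CharP R p]
    (hperfect : Function.Bijective fun x : R => x ^ p) :
    Function.Injective (lamHom p R) ∧
    (⨅ n : ℕ, (Iideal R) ^ (n + 1)) =
      (RingHom.ker (WittVector.map (p := p) (piBar p R))).comap (lamHom p R) := by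
  haveI hPA : PerfectRing (MonoidAlgebra (ZMod p) R) p := perfect_A p R hperfect
  haveI hPR : PerfectRing R p := perfect_R p R hperfect
  have hs : Function.Surjective fun x : R => x ^ p := hperfect.surjective
  constructor
  · -- injectivity
    rw [injective_iff_map_eq_zero]
    intro x hx
    have key : ∀ n : ℕ, ∃ z : MonoidAlgebra ℤ R,
        x = (p : MonoidAlgebra ℤ R) ^ n * z ∧ lamHom p R z = 0 := by
      intro n
      induction n with
      | zero => exact ⟨x, by simp, hx⟩
      | succ n ih =>
        obtain ⟨z, hz, hlz⟩ := ih
        obtain ⟨w, hw⟩ := lam_ker_dvd p R z hlz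
        have hlw : lamHom p R w = 0 := by
          have h1 : (p : WittVector p (MonoidAlgebra (ZMod p) R)) * lamHom p R w = 0 := by
            rw [← map_natCast (lamHom p R), ← map_mul, ← hw, hlz]
          exact wv_p_mul_eq_zero h1
        exact ⟨w, by rw [hz, hw]; ring, hlw⟩
    by_contra hx0
    set x' : R →₀ ℤ := x.coeff with hx'
    obtain ⟨r, hr⟩ : ∃ r : R, x' r ≠ 0 := by
      by_contra hall
      push_neg at hall
      exact hx0 (MonoidAlgebra.ext (Finsupp.ext fun r => hall r))
    set n : ℕ := (x' r).natAbs with hn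
    obtain ⟨z, hz, -⟩ := key n
    set z' : R →₀ ℤ := z.coeff with hzz
    have hdvd : (p : ℤ) ^ n ∣ x' r := by
      have hps : (p : MonoidAlgebra ℤ R) ^ n
          = MonoidAlgebra.single (1 : R) (((p : ℕ) : ℤ) ^ n) := by
        have h0 : ((p : ℕ) : MonoidAlgebra ℤ R) ^ n
            = MonoidAlgebra.singleOneRingHom (((p : ℕ) : ℤ) ^ n) := by
          rw [map_pow, map_natCast]
        rw [h0]
        rfl
      rw [hps] at hz
      have h6 := congrArg (fun f : MonoidAlgebra ℤ R => f.coeff r) hz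
      simp only [MonoidAlgebra.coeff_single_one_mul] at h6
      refine ⟨z' r, ?_⟩
      rw [show ((p : ℤ) ^ n : ℤ) = (((p : ℕ) : ℤ) ^ n) by push_cast; ring]
      exact h6
    have habs : |x' r| < (p : ℤ) ^ n := by
      have h2 : ((x' r).natAbs : ℤ) < (2 : ℤ) ^ n := by
        exact_mod_cast Nat.lt_two_pow_self (n := (x' r).natAbs)
      have h3 : (2 : ℤ) ^ n ≤ (p : ℤ) ^ n := by
        apply pow_le_pow_left₀ (by norm_num)
        exact_mod_cast (Fact.out : p.Prime).two_le
      rw [Int.abs_eq_natAbs]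
      omega
    exact hr (Int.eq_zero_of_abs_lt_dvd hdvd habs)
  · -- the ideal equality
    apply le_antisymm
    · intro x hx
      rw [Ideal.mem_iInf] at hx
      rw [Ideal.mem_comap, RingHom.mem_ker]
      have hmu : muHom p R x = 0 := by
        ext i
        rw [WittVector.zero_coeff]
        have hxi : x ∈ Iideal R ^ (i + 1) := hx i
        have h1 : muHom p R x ∈ Ideal.map (muHom p R) (Iideal R ^ (i + 1)) :=
          Ideal.mem_map_of_mem _ hxi
        rw [Ideal.map_pow] at h1
        have h2 : Ideal.map (muHom p R) (Iideal R) ≤ Ideal.span {(p : WittVector p R)} := by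
          rw [Ideal.map_le_iff_le_comap]
          intro y hy
          rw [Ideal.mem_comap, Ideal.mem_span_singleton]
          obtain ⟨w, hw⟩ := wv_exists_p_pow_mul 1 (muHom p R y) (by
            intro j hj
            interval_cases j
            rw [cc_mu]
            exact hy)
          exact ⟨w, by rw [hw]; ring⟩
        have h3 : muHom p R x ∈ Ideal.span {(p : WittVector p R)} ^ (i + 1) :=
          Ideal.pow_right_mono h2 _ h1
        rw [Ideal.span_singleton_pow, Ideal.mem_span_singleton] at h3
        obtain ⟨w, hw⟩ := h3
        rw [hw]
        exact wv_coeff_p_pow_mul (i + 1) w (by omega)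
      exact hmu
    · intro x hx
      rw [Ideal.mem_comap, RingHom.mem_ker] at hx
      have hmu : muHom p R x = 0 := hx
      rw [Ideal.mem_iInf]
      intro n
      induction n with
      | zero =>
        rw [zero_add, pow_one, Iideal, RingHom.mem_ker,
          show piHom R x = (muHom p R x).coeff 0 from (cc_mu p R x).symm, hmu,
          WittVector.zero_coeff]
      | succ n ih =>
        obtain ⟨t, y, hy, hxty⟩ := decompose p R hs n ih
        -- μ y ∈ p^(n+2) 𝕎R
        have h1 : muHom p R y ∈ Ideal.span {(p : WittVector p R)} ^ (n + 2) := by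
          have ha : muHom p R y ∈ Ideal.map (muHom p R) (Iideal R ^ (n + 2)) :=
            Ideal.mem_map_of_mem _ hy
          rw [Ideal.map_pow] at ha
          refine Ideal.pow_right_mono ?_ _ ha
          rw [Ideal.map_le_iff_le_comap]
          intro w hw
          rw [Ideal.mem_comap, Ideal.mem_span_singleton]
          obtain ⟨v, hv⟩ := wv_exists_p_pow_mul 1 (muHom p R w) (by
            intro j hj
            interval_cases j
            rw [cc_mu]
            exact hw)
          exact ⟨v, by rw [hv]; ring⟩
        rw [Ideal.span_singleton_pow, Ideal.mem_span_singleton] at h1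
        obtain ⟨w, hw⟩ := h1
        have h2 : (p : WittVector p R) ^ (n + 1)
            * (WittVector.teichmuller p t + (p : WittVector p R) * w) = 0 := by
          have h3 := congrArg (muHom p R) hxty
          rw [hmu, map_add, map_mul, map_pow, map_natCast, mu_of, hw] at h3
          linear_combination -h3
        have h4 : WittVector.teichmuller p t + (p : WittVector p R) * w = 0 :=
          wv_p_pow_mul_eq_zero h2
        have ht : t = 0 := by
          have h5 : WittVector.constantCoeff (WittVector.teichmuller p t
              + (p : WittVector p R) * w) = 0 := by rw [h4, map_zero]
          rw [map_add, map_mul, map_natCast] at h5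
          simpa [WittVector.constantCoeff_apply, WittVector.teichmuller_coeff_zero,
            CharP.cast_eq_zero R p] using h5
        have hof : MonoidAlgebra.of ℤ R t ∈ Iideal R ^ (n + 2) := by
          rw [ht]
          exact of_zero_mem_pow R (n + 2) (by omega)
        rw [hxty]
        exact add_mem (Ideal.mul_mem_left _ _ hof) hy

end
end

section
/- Let p be a prime and R a commutative ring of characteristic p whose Frobenius endomorphism x ↦ x^p is injective. For n ≥ 1 set I_n = {a ∈ ℤR : φ^{n−1}(a) ∈ I^n}. Then the kernel of the ring homomorphism α_n = truncate_n ∘ α : ℤR → W_n R is exactly I_n; equivalently α induces an injective ring homomorphism β_n : ℤR/I_n → W_n R. -/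
noncomputable section

/-- The ring homomorphism `α : ℤR → 𝕎 R` with `α [r] = ⟨r⟩` (Teichmüller). -/
def alphaHom (p : ℕ) [Fact p.Prime] (R : Type*) [CommRing R] :
    MonoidAlgebra ℤ R →+* WittVector p R :=
  (MonoidAlgebra.lift ℤ (WittVector p R) R (WittVector.teichmuller p)).toRingHom

/-- The lifted Frobenius `φ : ℤR → ℤR`, `φ [r] = [r^p]`. -/
def phiZR (p : ℕ) (R : Type*) [CommRing R] :
    MonoidAlgebra ℤ R →+* MonoidAlgebra ℤ R :=
  (MonoidAlgebra.lift ℤ (MonoidAlgebra ℤ R) R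
    ((MonoidAlgebra.of ℤ R).comp (powMonoidHom p))).toRingHom

/-- The `k`-fold iterate `φ^k` of the lifted Frobenius, as a ring map. -/
def phiPow (p : ℕ) (R : Type*) [CommRing R] :
    ℕ → (MonoidAlgebra ℤ R →+* MonoidAlgebra ℤ R)
  | 0 => RingHom.id _
  | k + 1 => (phiZR p R).comp (phiPow p R k)

/-- The ideal `I_n = {a ∈ ℤR : φ^{n-1}(a) ∈ I^n}`. -/
def In (p : ℕ) (R : Type*) [CommRing R] (n : ℕ) : Ideal (MonoidAlgebra ℤ R) :=
  ((Iideal R) ^ n).comap (phiPow p R (n - 1))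

namespace Statement15Aux

open WittVector

variable {p : ℕ} [hp : Fact p.Prime] {R : Type*} [CommRing R]

theorem maExt {S : Type*} [Ring S] {f g : MonoidAlgebra ℤ R →+* S}
    (h : ∀ r : R, f (MonoidAlgebra.of ℤ R r) = g (MonoidAlgebra.of ℤ R r)) : f = g := by
  refine MonoidAlgebra.ringHom_ext (fun b => ?_) (fun a => ?_)
  · have h1 : (MonoidAlgebra.single (1 : R) (b : ℤ)) = b • (1 : MonoidAlgebra ℤ R) := by
      rw [MonoidAlgebra.one_def, MonoidAlgebra.smul_single, smul_eq_mul, mul_one]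
    rw [h1, map_zsmul, map_zsmul, map_one, map_one]
  · simpa [MonoidAlgebra.of_apply] using h a

theorem alpha_of (r : R) :
    alphaHom p R (MonoidAlgebra.of ℤ R r) = teichmuller p r := by
  simp [alphaHom]

theorem pi_of (r : R) : piHom R (MonoidAlgebra.of ℤ R r) = r := by
  simp [piHom]

theorem phi_of (r : R) :
    phiZR p R (MonoidAlgebra.of ℤ R r) = MonoidAlgebra.of ℤ R (r ^ p) := by
  simp [phiZR, powMonoidHom]

theorem ghost_zero (x : WittVector p R) : ghostComponent 0 x = x.coeff 0 := by
  rw [ghostComponent_apply, wittPolynomial_zero, MvPolynomial.aeval_X]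

theorem coeff_zero_alpha (a : MonoidAlgebra ℤ R) :
    (alphaHom p R a).coeff 0 = piHom R a := by
  have h : (ghostComponent (p := p) (R := R) 0).comp (alphaHom p R) = piHom R := by
    apply maExt
    intro r
    rw [RingHom.comp_apply, alpha_of, ghost_zero, teichmuller_coeff_zero, pi_of]
  rw [← ghost_zero, ← RingHom.comp_apply, h]

theorem add_coeff_zero (x y : WittVector p R) :
    (x + y).coeff 0 = x.coeff 0 + y.coeff 0 := by
  rw [← ghost_zero, ← ghost_zero, ← ghost_zero, map_add]

theorem versch_inj : Function.Injective (verschiebung (p := p) (R := R)) := by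
  intro a b h
  ext n
  have := congrArg (fun z : WittVector p R => z.coeff (n + 1)) h
  simpa [verschiebung_coeff_add_one] using this

theorem exists_versch (x : WittVector p R) (h : x.coeff 0 = 0) :
    ∃ y, verschiebung y = x := by
  refine ⟨WittVector.mk p fun i => x.coeff (i + 1), ?_⟩
  ext n
  cases n with
  | zero => simpa [verschiebung_coeff_zero] using h.symm
  | succ n => simp [verschiebung_coeff_add_one, WittVector.coeff_mk]

theorem iterate_versch_coeff_lt (y : WittVector p R) (n : ℕ) :
    ∀ i < n, ((verschiebung (p := p) (R := R))^[n] y).coeff i = 0 := by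
  induction n with
  | zero => intro i hi; omega
  | succ n ih =>
    intro i hi
    rw [Function.iterate_succ_apply']
    cases i with
    | zero => exact verschiebung_coeff_zero _
    | succ i => rw [verschiebung_coeff_add_one]; exact ih i (by omega)

theorem iterate_versch_coeff_add (y : WittVector p R) (n i : ℕ) :
    ((verschiebung (p := p) (R := R))^[n] y).coeff (n + i) = y.coeff i := by
  induction n with
  | zero => simp
  | succ n ih =>
    rw [Function.iterate_succ_apply']
    have h1 : n + 1 + i = (n + i) + 1 := by omega
    rw [h1, verschiebung_coeff_add_one, ih]

theorem exists_iterate_versch (n : ℕ) (x : WittVector p R)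
    (h : ∀ i < n, x.coeff i = 0) :
    ∃ y, (verschiebung (p := p) (R := R))^[n] y = x := by
  induction n generalizing x with
  | zero => exact ⟨x, rfl⟩
  | succ n ih =>
    obtain ⟨y₀, hy₀⟩ := exists_versch x (h 0 (Nat.succ_pos n))
    have hy₀c : ∀ i < n, y₀.coeff i = 0 := by
      intro i hi
      have h2 : (verschiebung y₀).coeff (i + 1) = 0 := by
        rw [hy₀]; exact h (i + 1) (by omega)
      rwa [verschiebung_coeff_add_one] at h2
    obtain ⟨z, hz⟩ := ih y₀ hy₀c
    exact ⟨z, by rw [Function.iterate_succ_apply', hz, hy₀]⟩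

theorem iterate_versch_add (u v : WittVector p R) (n : ℕ) :
    (verschiebung (p := p) (R := R))^[n] (u + v) =
      verschiebung^[n] u + verschiebung^[n] v := by
  induction n with
  | zero => rfl
  | succ n ih =>
    rw [Function.iterate_succ_apply', Function.iterate_succ_apply',
      Function.iterate_succ_apply', ih, map_add]

theorem add_coeff_lemma (x y : WittVector p R) (m : ℕ)
    (hx : ∀ i < m, x.coeff i = 0) (hy : ∀ i < m, y.coeff i = 0) :
    (∀ i < m, (x + y).coeff i = 0) ∧
      (x + y).coeff m = x.coeff m + y.coeff m := by
  obtain ⟨u, hu⟩ := exists_iterate_versch m x hx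
  obtain ⟨v, hv⟩ := exists_iterate_versch m y hy
  have key : x + y = verschiebung^[m] (u + v) := by
    rw [← hu, ← hv, iterate_versch_add]
  have h0 : ∀ w : WittVector p R, ((verschiebung (p := p) (R := R))^[m] w).coeff m = w.coeff 0 :=
    fun w => by simpa using iterate_versch_coeff_add w m 0
  refine ⟨fun i hi => by rw [key]; exact iterate_versch_coeff_lt _ _ i hi, ?_⟩
  rw [key, h0, ← hu, ← hv, h0, h0, add_coeff_zero]

variable [CharP R p]

theorem frob_teich (r : R) :
    WittVector.frobenius (teichmuller p r) = teichmuller p (r ^ p) := by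
  have hp0 : p ≠ 0 := hp.out.ne_zero
  ext n
  cases n with
  | zero => rw [coeff_frobenius_charP, teichmuller_coeff_zero, teichmuller_coeff_zero]
  | succ n =>
    rw [coeff_frobenius_charP, teichmuller_coeff_pos p r (n + 1) (Nat.succ_pos n),
      teichmuller_coeff_pos p (r ^ p) (n + 1) (Nat.succ_pos n), zero_pow hp0]

theorem alpha_phi (a : MonoidAlgebra ℤ R) :
    alphaHom p R (phiZR p R a) = WittVector.frobenius (alphaHom p R a) := by
  have h : (alphaHom p R).comp (phiZR p R) =
      (WittVector.frobenius (p := p) (R := R)).comp (alphaHom p R) := by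
    apply maExt
    intro r
    rw [RingHom.comp_apply, RingHom.comp_apply, phi_of, alpha_of, alpha_of, frob_teich]
  exact RingHom.congr_fun h a

theorem pi_phi (a : MonoidAlgebra ℤ R) :
    piHom R (phiZR p R a) = (piHom R a) ^ p := by
  haveI : ExpChar R p := .prime hp.out
  have h : (piHom R).comp (phiZR p R) = (_root_.frobenius R p).comp (piHom R) := by
    apply maExt
    intro r
    rw [RingHom.comp_apply, RingHom.comp_apply, phi_of, pi_of, pi_of, frobenius_def]
  have h2 := RingHom.congr_fun h a
  simpa [frobenius_def] using h2

theorem pow_p_pow_eq_zero (hFrob : Function.Injective fun x : R => x ^ p) {x : R}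
    (k : ℕ) (h : x ^ p ^ k = 0) : x = 0 := by
  induction k with
  | zero => simpa using h
  | succ k ih =>
    apply ih
    apply hFrob
    show (x ^ p ^ k) ^ p = 0 ^ p
    rw [← pow_mul, ← pow_succ, h, zero_pow hp.out.ne_zero]

theorem iterate_frob_coeff (x : WittVector p R) (k i : ℕ) :
    ((WittVector.frobenius (p := p) (R := R))^[k] x).coeff i = x.coeff i ^ p ^ k := by
  induction k with
  | zero => simp
  | succ k ih =>
    rw [Function.iterate_succ_apply', coeff_frobenius_charP, ih, ← pow_mul, ← pow_succ]

theorem mul_coeff_lemma (x y : WittVector p R) (a b : ℕ)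
    (hx : ∀ i < a, x.coeff i = 0) (hy : ∀ i < b, y.coeff i = 0) :
    (∀ i < a + b, (x * y).coeff i = 0) ∧
      (x * y).coeff (a + b) = x.coeff a ^ p ^ b * y.coeff b ^ p ^ a := by
  obtain ⟨u, hu⟩ := exists_iterate_versch a x hx
  obtain ⟨v, hv⟩ := exists_iterate_versch b y hy
  have key : x * y = verschiebung^[a + b] (WittVector.frobenius^[b] u * WittVector.frobenius^[a] v) := by
    rw [← hu, ← hv, iterate_verschiebung_mul]
  constructor
  · intro i hi; rw [key]; exact iterate_versch_coeff_lt _ _ i hi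
  · have h1 : (x * y).coeff (a + b) = (WittVector.frobenius^[b] u * WittVector.frobenius^[a] v).coeff 0 := by
      rw [key]; simpa using iterate_versch_coeff_add (WittVector.frobenius^[b] u * WittVector.frobenius^[a] v) (a + b) 0
    have hxa : x.coeff a = u.coeff 0 := by
      rw [← hu]; simpa using iterate_versch_coeff_add u a 0
    have hyb : y.coeff b = v.coeff 0 := by
      rw [← hv]; simpa using iterate_versch_coeff_add v b 0
    rw [h1, mul_coeff_zero, iterate_frob_coeff, iterate_frob_coeff, hxa, hyb]

/-- Coefficients of `α b` vanish below `m` for `b ∈ I^m`. -/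
theorem alpha_Ipow : ∀ (m : ℕ) (b : MonoidAlgebra ℤ R), b ∈ Iideal R ^ m →
    ∀ i < m, (alphaHom p R b).coeff i = 0 := by
  intro m
  induction m with
  | zero => intro b _ i hi; omega
  | succ m ih =>
    intro b hb
    rw [pow_succ] at hb
    refine Submodule.mul_induction_on hb ?_ ?_
    · intro x hx e he i hi
      have hxc : ∀ i < m, (alphaHom p R x).coeff i = 0 := ih x hx
      have hec : ∀ i < 1, (alphaHom p R e).coeff i = 0 := by
        intro i hi1
        interval_cases i
        rw [coeff_zero_alpha]
        exact he
      have := (mul_coeff_lemma (alphaHom p R x) (alphaHom p R e) m 1 hxc hec).1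
      rw [map_mul]
      exact this i hi
    · intro x y hx hy i hi
      have := (add_coeff_lemma (alphaHom p R x) (alphaHom p R y) (m + 1) hx hy).1
      rw [map_add]
      exact this i hi

theorem int_fermat (m : ℤ) : ∃ k : ℤ, m ^ p = m + p * k := by
  have h : ((m ^ p - m : ℤ) : ZMod p) = 0 := by
    push_cast
    rw [ZMod.pow_card]
    ring
  rw [ZMod.intCast_zmod_eq_zero_iff_dvd] at h
  obtain ⟨k, hk⟩ := h
  exact ⟨k, by linarith⟩

theorem phi_fermat (b : MonoidAlgebra ℤ R) :
    ∃ c, phiZR p R b = b ^ p + (p : MonoidAlgebra ℤ R) * c := by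
  induction b using MonoidAlgebra.induction_on with
  | of r =>
    refine ⟨0, ?_⟩
    rw [phi_of, map_pow, mul_zero, add_zero]
  | add f g hf hg =>
    obtain ⟨c, hc⟩ := hf
    obtain ⟨d, hd⟩ := hg
    obtain ⟨r, hr⟩ := exists_add_pow_prime_eq hp.out f g
    refine ⟨c + d - f * g * r, ?_⟩
    rw [map_add, hc, hd, hr]
    push_cast
    ring
  | smul m f hf =>
    obtain ⟨c, hc⟩ := hf
    obtain ⟨k, hk⟩ := int_fermat (p := p) m
    refine ⟨m • c - k • (f ^ p), ?_⟩
    rw [map_zsmul, hc]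
    simp only [zsmul_eq_mul]
    rw [mul_pow]
    have hcast : ((m : ℤ) : MonoidAlgebra ℤ R) ^ p =
        ((m : ℤ) : MonoidAlgebra ℤ R) + (p : MonoidAlgebra ℤ R) * ((k : ℤ) : MonoidAlgebra ℤ R) := by
      have := congrArg (Int.cast : ℤ → MonoidAlgebra ℤ R) hk
      push_cast at this
      exact this
    linear_combination (-(f ^ p)) * hcast

/-- The crucial coefficient computation: if `π e = 0` and `φ e = e^p + p c`
then `(π c)^p = ((α e).coeff 1)^p`. -/
theorem base_c (e : MonoidAlgebra ℤ R) (he : piHom R e = 0) (c : MonoidAlgebra ℤ R)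
    (hc : phiZR p R e = e ^ p + (p : MonoidAlgebra ℤ R) * c) :
    piHom R c ^ p = ((alphaHom p R e).coeff 1) ^ p := by
  have hp2 : 2 ≤ p := hp.out.two_le
  set x := alphaHom p R e with hxdef
  have hx0 : x.coeff 0 = 0 := by rw [hxdef, coeff_zero_alpha, he]
  obtain ⟨f, hf⟩ := exists_versch x hx0
  -- x ^ p has vanishing coefficients in degrees < 2
  have hxlt : ∀ i < 1, x.coeff i = 0 := by
    intro i hi; interval_cases i; exact hx0
  have hxx : ∀ i < 2, (x * x).coeff i = 0 := by
    have := (mul_coeff_lemma x x 1 1 hxlt hxlt).1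
    simpa using this
  have htriv : ∀ i < 0, (x ^ (p - 2)).coeff i = 0 := by intro i hi; omega
  have hxp_eq : x ^ p = (x * x) * x ^ (p - 2) := by
    rw [← pow_two, ← pow_add]
    congr 1
    omega
  have hxp : ∀ i < 2, (x ^ p).coeff i = 0 := by
    intro i hi
    rw [hxp_eq]
    have := (mul_coeff_lemma (x * x) (x ^ (p - 2)) 2 0 hxx htriv).1
    exact this i (by omega)
  obtain ⟨w, hw⟩ := exists_iterate_versch 2 (x ^ p) hxp
  have hw2 : x ^ p = verschiebung (verschiebung w) := by
    rw [← hw]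
    rw [show (2 : ℕ) = 1 + 1 from rfl, Function.iterate_succ_apply', Function.iterate_succ_apply',
      Function.iterate_zero_apply]
  -- apply α to the defining equation of c
  have hmain : alphaHom p R (phiZR p R e) =
      x ^ p + (p : WittVector p R) * alphaHom p R c := by
    rw [hc, map_add, map_mul, map_pow, map_natCast]
  have hFx : WittVector.frobenius x = verschiebung (WittVector.frobenius f) := by
    rw [← hf, frobenius_verschiebung, verschiebung_frobenius]
  have hpc : (p : WittVector p R) * alphaHom p R c =
      verschiebung (WittVector.frobenius (alphaHom p R c)) := by
    rw [verschiebung_frobenius, mul_comm]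
  rw [alpha_phi, hFx, hw2, hpc, ← map_add] at hmain
  have hkey : WittVector.frobenius f = verschiebung w + WittVector.frobenius (alphaHom p R c) :=
    versch_inj hmain
  have h0 := congrArg (fun z : WittVector p R => z.coeff 0) hkey
  simp only [coeff_frobenius_charP] at h0
  rw [add_coeff_zero, verschiebung_coeff_zero, coeff_frobenius_charP, zero_add,
    coeff_zero_alpha] at h0
  have hf0 : f.coeff 0 = x.coeff 1 := by
    rw [← hf, verschiebung_coeff_add_one]
  rw [hf0] at h0
  exact h0.symm

theorem p_mem_I : (p : MonoidAlgebra ℤ R) ∈ Iideal R := by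
  have : piHom R (p : MonoidAlgebra ℤ R) = 0 := by
    rw [map_natCast]
    exact CharP.cast_eq_zero R p
  exact this

/-- The main technical lemma. -/
theorem main_lemma : ∀ (m : ℕ) (b : MonoidAlgebra ℤ R), b ∈ Iideal R ^ (m + 1) →
    ∃ c : MonoidAlgebra ℤ R,
      phiZR p R b - (p : MonoidAlgebra ℤ R) ^ (m + 1) * c ∈ Iideal R ^ (m + 2) ∧
      piHom R c ^ p ^ (m + 1) = ((alphaHom p R b).coeff (m + 1)) ^ p := by
  have hp2 : 2 ≤ p := hp.out.two_le
  intro m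
  induction m with
  | zero =>
    intro b hb
    rw [pow_one] at hb
    obtain ⟨c, hc⟩ := phi_fermat (p := p) b
    refine ⟨c, ?_, ?_⟩
    · have : phiZR p R b - (p : MonoidAlgebra ℤ R) ^ (0 + 1) * c = b ^ p := by
        rw [hc]; ring
      rw [this]
      exact Ideal.pow_le_pow_right hp2 (Ideal.pow_mem_pow hb p)
    · rw [pow_one]
      exact base_c b hb c hc
  | succ m ih =>
    intro b hb
    rw [pow_succ] at hb
    have key : b ∈ Iideal R ^ (m + 1) * Iideal R →
        (∃ c : MonoidAlgebra ℤ R,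
          phiZR p R b - (p : MonoidAlgebra ℤ R) ^ (m + 2) * c ∈ Iideal R ^ (m + 3) ∧
          piHom R c ^ p ^ (m + 2) = ((alphaHom p R b).coeff (m + 2)) ^ p) := by
      intro hb'
      refine Submodule.mul_induction_on
        (C := fun b => b ∈ Iideal R ^ (m + 2) ∧
          ∃ c : MonoidAlgebra ℤ R,
            phiZR p R b - (p : MonoidAlgebra ℤ R) ^ (m + 2) * c ∈ Iideal R ^ (m + 3) ∧
            piHom R c ^ p ^ (m + 2) = ((alphaHom p R b).coeff (m + 2)) ^ p)
        hb' ?_ ?_ |>.2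
      · -- generators: x * e with x ∈ I^(m+1), e ∈ I
        intro x hx e he
        obtain ⟨cx, hcx1, hcx2⟩ := ih x hx
        obtain ⟨ce, hce⟩ := phi_fermat (p := p) e
        have hce2 : piHom R ce ^ p = ((alphaHom p R e).coeff 1) ^ p := base_c e he ce hce
        have hmem : x * e ∈ Iideal R ^ (m + 2) := by
          rw [pow_succ]
          exact Ideal.mul_mem_mul hx he
        refine ⟨hmem, cx * ce, ?_, ?_⟩
        · -- ideal membership
          have heq : phiZR p R (x * e) - (p : MonoidAlgebra ℤ R) ^ (m + 2) * (cx * ce) =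
              ((p : MonoidAlgebra ℤ R) ^ (m + 1) * e ^ p) * cx +
              (phiZR p R x - (p : MonoidAlgebra ℤ R) ^ (m + 1) * cx) * phiZR p R e := by
            rw [map_mul, hce]
            ring
          rw [heq]
          apply Ideal.add_mem
          · have h1 : (p : MonoidAlgebra ℤ R) ^ (m + 1) * e ^ p ∈ Iideal R ^ (m + 3) := by
              have hpp : (p : MonoidAlgebra ℤ R) ^ (m + 1) ∈ Iideal R ^ (m + 1) :=
                Ideal.pow_mem_pow p_mem_I (m + 1)
              have hep : e ^ p ∈ Iideal R ^ 2 :=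
                Ideal.pow_le_pow_right hp2 (Ideal.pow_mem_pow he p)
              have := Ideal.mul_mem_mul hpp hep
              rwa [← pow_add] at this
            exact Ideal.mul_mem_right cx _ h1
          · have hphie : phiZR p R e ∈ Iideal R := by
              have : piHom R (phiZR p R e) = 0 := by rw [pi_phi, he, zero_pow hp.out.ne_zero]
              exact this
            have := Ideal.mul_mem_mul hcx1 hphie
            rwa [← pow_succ] at this
        · -- coefficient identity
          have hxc : ∀ i < m + 1, (alphaHom p R x).coeff i = 0 :=
            alpha_Ipow (p := p) (m + 1) x hx
          have hec : ∀ i < 1, (alphaHom p R e).coeff i = 0 := by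
            intro i hi
            interval_cases i
            rw [coeff_zero_alpha]; exact he
          have hco := (mul_coeff_lemma (alphaHom p R x) (alphaHom p R e) (m + 1) 1 hxc hec).2
          set A := (alphaHom p R x).coeff (m + 1)
          set B := (alphaHom p R e).coeff 1
          have hcoeff : (alphaHom p R (x * e)).coeff (m + 2) = A ^ p ^ 1 * B ^ p ^ (m + 1) := by
            rw [map_mul]
            exact hco
          rw [hcoeff, map_mul]
          have exp1 : (piHom R cx) ^ p ^ (m + 2) = ((piHom R cx) ^ p ^ (m + 1)) ^ p := by
            rw [← pow_mul, ← pow_succ]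
          have exp2 : (piHom R ce) ^ p ^ (m + 2) = ((piHom R ce) ^ p) ^ p ^ (m + 1) := by
            rw [← pow_mul, ← pow_succ']
          rw [mul_pow, exp1, exp2, hcx2, hce2, mul_pow, pow_one]
          congr 1
          rw [← pow_mul, ← pow_mul, mul_comm]
      · -- additivity
        rintro x y ⟨hxmem, cx, hcx1, hcx2⟩ ⟨hymem, cy, hcy1, hcy2⟩
        haveI : ExpChar R p := .prime hp.out
        refine ⟨Ideal.add_mem _ hxmem hymem, cx + cy, ?_, ?_⟩
        · have heq : phiZR p R (x + y) - (p : MonoidAlgebra ℤ R) ^ (m + 2) * (cx + cy) =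
              (phiZR p R x - (p : MonoidAlgebra ℤ R) ^ (m + 2) * cx) +
              (phiZR p R y - (p : MonoidAlgebra ℤ R) ^ (m + 2) * cy) := by
            rw [map_add]; ring
          rw [heq]
          exact Ideal.add_mem _ hcx1 hcy1
        · have hxc := alpha_Ipow (p := p) (m + 2) x hxmem
          have hyc := alpha_Ipow (p := p) (m + 2) y hymem
          have hco := (add_coeff_lemma (alphaHom p R x) (alphaHom p R y) (m + 2) hxc hyc).2
          rw [map_add, map_add, hco, add_pow_char_pow, add_pow_char, hcx2, hcy2]
    exact key hb

theorem alpha_phiPow (k : ℕ) (a : MonoidAlgebra ℤ R) :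
    alphaHom p R (phiPow p R k a) = (WittVector.frobenius (p := p) (R := R))^[k] (alphaHom p R a) := by
  induction k with
  | zero => rfl
  | succ k ih =>
    have h1 : phiPow p R (k + 1) a = phiZR p R (phiPow p R k a) := rfl
    rw [h1, alpha_phi, ih]
    exact (Function.iterate_succ_apply' (⇑(WittVector.frobenius (p := p) (R := R))) k
      (alphaHom p R a)).symm

/-- The hard direction: vanishing coefficients imply membership in `I_n`. -/
theorem hard_dir (hFrob : Function.Injective fun x : R => x ^ p) :
    ∀ (m : ℕ) (a : MonoidAlgebra ℤ R), (∀ i < m + 1, (alphaHom p R a).coeff i = 0) →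
      phiPow p R m a ∈ Iideal R ^ (m + 1) := by
  intro m
  induction m with
  | zero =>
    intro a ha
    have h0 := ha 0 (by omega)
    rw [coeff_zero_alpha] at h0
    rw [pow_one]
    exact h0
  | succ m ih =>
    intro a ha
    have hb : phiPow p R m a ∈ Iideal R ^ (m + 1) := ih a (fun i hi => ha i (by omega))
    obtain ⟨c, hc1, hc2⟩ := main_lemma (p := p) m (phiPow p R m a) hb
    have hcoeff : (alphaHom p R (phiPow p R m a)).coeff (m + 1) = 0 := by
      rw [alpha_phiPow, iterate_frob_coeff, ha (m + 1) (by omega), zero_pow]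
      exact pow_ne_zero m hp.out.ne_zero
    rw [hcoeff] at hc2
    have hc0 : piHom R c = 0 := by
      apply pow_p_pow_eq_zero hFrob (m + 1)
      rw [hc2, zero_pow hp.out.ne_zero]
    have hcmem : c ∈ Iideal R := hc0
    have hpc : (p : MonoidAlgebra ℤ R) ^ (m + 1) * c ∈ Iideal R ^ (m + 2) := by
      have := Ideal.mul_mem_mul (Ideal.pow_mem_pow (p_mem_I (p := p) (R := R)) (m + 1)) hcmem
      rwa [← pow_succ] at this
    have : phiPow p R (m + 1) a = (phiZR p R (phiPow p R m a) -
        (p : MonoidAlgebra ℤ R) ^ (m + 1) * c) + (p : MonoidAlgebra ℤ R) ^ (m + 1) * c := by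
      have h1 : phiPow p R (m + 1) a = phiZR p R (phiPow p R m a) := rfl
      rw [h1]; ring
    rw [this]
    exact Ideal.add_mem _ hc1 hpc

/-- The easy direction. -/
theorem easy_dir (hFrob : Function.Injective fun x : R => x ^ p)
    (m : ℕ) (a : MonoidAlgebra ℤ R) (h : phiPow p R m a ∈ Iideal R ^ (m + 1)) :
    ∀ i < m + 1, (alphaHom p R a).coeff i = 0 := by
  intro i hi
  have h1 := alpha_Ipow (p := p) (m + 1) (phiPow p R m a) h i hi
  rw [alpha_phiPow, iterate_frob_coeff] at h1
  exact pow_p_pow_eq_zero hFrob m h1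

end Statement15Aux

open Statement15Aux in
/-- Let `p` be prime and `R` a commutative ring of characteristic `p` with
injective Frobenius.  Then the kernel of `α_n = truncate_n ∘ α : ℤR → W_n R`
is exactly `I_n`; equivalently `α` induces an injective ring homomorphism
`β_n : ℤR/I_n → W_n R`. -/
theorem statement15 (p : ℕ) [Fact p.Prime] (R : Type*) [CommRing R] [CharP R p]
    (hFrob : Function.Injective fun x : R => x ^ p) (n : ℕ) (hn : 1 ≤ n) :
    RingHom.ker ((WittVector.truncate n).comp (alphaHom p R)) = In p R n ∧
    ∃ β : (MonoidAlgebra ℤ R ⧸ In p R n) →+* TruncatedWittVector p n R,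
      Function.Injective β ∧
      ∀ a : MonoidAlgebra ℤ R,
        β (Ideal.Quotient.mk (In p R n) a) =
          WittVector.truncate n (alphaHom p R a) := by
  obtain ⟨m, rfl⟩ : ∃ m, n = m + 1 := ⟨n - 1, (Nat.succ_pred_eq_of_pos hn).symm⟩
  have hker : RingHom.ker ((WittVector.truncate (m + 1)).comp (alphaHom p R)) =
      In p R (m + 1) := by
    ext a
    have hmem : a ∈ RingHom.ker ((WittVector.truncate (m + 1)).comp (alphaHom p R)) ↔
        ∀ i < m + 1, (alphaHom p R a).coeff i = 0 := by
      rw [RingHom.mem_ker, RingHom.comp_apply, ← RingHom.mem_ker,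
        WittVector.mem_ker_truncate]
    have hIn : a ∈ In p R (m + 1) ↔ phiPow p R m a ∈ Iideal R ^ (m + 1) := by
      rw [In, Ideal.mem_comap]
      simp
    rw [hmem, hIn]
    constructor
    · intro h
      exact hard_dir hFrob m a h
    · intro h
      exact easy_dir hFrob m a h
  refine ⟨hker, ?_⟩
  refine ⟨Ideal.Quotient.lift (In p R (m + 1))
    ((WittVector.truncate (m + 1)).comp (alphaHom p R))
    (fun a ha => by rw [← hker] at ha; exact RingHom.mem_ker.mp ha), ?_, ?_⟩
  · intro x y hxy
    obtain ⟨a, rfl⟩ := Ideal.Quotient.mk_surjective x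
    obtain ⟨b, rfl⟩ := Ideal.Quotient.mk_surjective y
    rw [Ideal.Quotient.lift_mk, Ideal.Quotient.lift_mk] at hxy
    rw [Ideal.Quotient.eq]
    rw [← hker, RingHom.mem_ker, map_sub, hxy, sub_self]
  · intro a
    rw [Ideal.Quotient.lift_mk, RingHom.comp_apply]

end
end

section
/- Let p be a prime and R a commutative ring of characteristic p whose Frobenius endomorphism x ↦ x^p is injective. Then for every n ≥ 1 one has {a ∈ ℤR : φ^{n−1}(a) ∈ I^n} = {a ∈ ℤR : φ^i(a) ∈ I^n for some i ≥ 0}; i.e. if some iterate of φ carries a into I^n then already φ^{n−1}(a) ∈ I^n. -/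
set_option maxHeartbeats 1000000

noncomputable section

namespace CD16

open MonoidAlgebra Finset WittVector

variable {p : ℕ} [Fact p.Prime] {R : Type*} [CommRing R]

lemma piHom_of (r : R) : piHom R (MonoidAlgebra.of ℤ R r) = r := by
  simp [piHom]

lemma phiZR_of (r : R) : phiZR p R (MonoidAlgebra.of ℤ R r) = MonoidAlgebra.of ℤ R (r ^ p) := by
  simp [phiZR, powMonoidHom]

lemma mem_I {a : MonoidAlgebra ℤ R} : a ∈ Iideal R ↔ piHom R a = 0 :=
  RingHom.mem_ker

/-- Extensionality for ring homs out of `ℤR`. -/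
lemma ringHom_ext_of {A : Type*} [Ring A] {f g : MonoidAlgebra ℤ R →+* A}
    (h : ∀ r : R, f (MonoidAlgebra.of ℤ R r) = g (MonoidAlgebra.of ℤ R r)) : f = g := by
  apply MonoidAlgebra.ringHom_ext
  · intro b
    have hb : (MonoidAlgebra.single (1 : R) b : MonoidAlgebra ℤ R)
        = ((b : ℤ) : MonoidAlgebra ℤ R) := by
      rw [MonoidAlgebra.intCast_def, Int.cast_id]
    rw [hb, map_intCast, map_intCast]
  · intro a
    simpa [MonoidAlgebra.of_apply] using h a

/-- Fermat: `p ∣ c^p - c` in `ℤ`. -/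
lemma int_fermat (c : ℤ) : (p : ℤ) ∣ c ^ p - c := by
  have : ((c ^ p - c : ℤ) : ZMod p) = 0 := by
    push_cast
    rw [ZMod.pow_card]
    ring
  exact_mod_cast (ZMod.intCast_zmod_eq_zero_iff_dvd _ p).mp this

/-- `φ x ≡ x^p mod p`. -/
lemma phi_pmod (x : MonoidAlgebra ℤ R) :
    ∃ d : MonoidAlgebra ℤ R, phiZR p R x = x ^ p + (p : MonoidAlgebra ℤ R) * d := by
  have key : phiZR p R x - x ^ p ∈ Ideal.span {((p : ℕ) : MonoidAlgebra ℤ R)} := by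
    induction x using MonoidAlgebra.induction_on with
    | of r =>
        rw [phiZR_of, ← map_pow, sub_self]
        exact Ideal.zero_mem _
    | add f g hf hg =>
        obtain ⟨w, hw⟩ := (Commute.all f g).exists_add_pow_prime_eq (Fact.out : p.Prime)
        rw [map_add, hw]
        have : phiZR p R f + phiZR p R g - (f ^ p + g ^ p + p * f * g * w)
            = (phiZR p R f - f ^ p) + (phiZR p R g - g ^ p) - (p : MonoidAlgebra ℤ R) * (f * g * w) := by
          push_cast
          ring
        rw [this]
        refine Ideal.sub_mem _ (Ideal.add_mem _ hf hg) ?_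
        exact Ideal.mul_mem_right _ _ (Ideal.subset_span (by simp))
    | smul c f hf =>
        rw [map_zsmul, smul_pow]
        have : c • phiZR p R f - c ^ p • f ^ p
            = c • (phiZR p R f - f ^ p) + (c - c ^ p) • (f ^ p) := by
          rw [smul_sub, sub_smul]
          abel
        rw [this]
        refine Ideal.add_mem _ (zsmul_mem hf c) ?_
        obtain ⟨m, hm⟩ := int_fermat (p := p) c
        have h1 : (c - c ^ p : ℤ) = (p : ℤ) * (-m) := by
          rw [← neg_sub (c ^ p) c, hm]; ring
        have : (c - c ^ p) • (f ^ p)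
            = ((p : ℕ) : MonoidAlgebra ℤ R) * ((-m) • f ^ p) := by
          rw [h1, mul_smul, zsmul_eq_mul, Int.cast_natCast]
        rw [this]
        exact Ideal.mul_mem_right _ _ (Ideal.subset_span (by simp))
  rw [Ideal.mem_span_singleton] at key
  obtain ⟨d, hd⟩ := key
  refine ⟨d, ?_⟩
  have : phiZR p R x = x ^ p + (phiZR p R x - x ^ p) := by ring
  rw [this, hd]

section CharP

variable [CharP R p]

lemma piHom_phi (a : MonoidAlgebra ℤ R) :
    piHom R (phiZR p R a) = piHom R a ^ p := by
  have h : (piHom R).comp (phiZR p R) = (frobenius R p).comp (piHom R) := by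
    apply ringHom_ext_of
    intro r
    rw [RingHom.comp_apply, RingHom.comp_apply, phiZR_of, piHom_of, piHom_of, frobenius_def]
  have h2 := RingHom.congr_fun h a
  rw [RingHom.comp_apply, RingHom.comp_apply, frobenius_def] at h2
  exact h2

lemma phi_mem_I {a : MonoidAlgebra ℤ R} (ha : a ∈ Iideal R) :
    phiZR p R a ∈ Iideal R := by
  rw [mem_I] at ha ⊢
  rw [piHom_phi, ha, zero_pow (Fact.out : p.Prime).ne_zero]

lemma phi_mem_pow {n : ℕ} : ∀ a ∈ (Iideal R) ^ n, phiZR p R a ∈ (Iideal R) ^ n := by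
  induction n with
  | zero =>
      intro a _
      rw [pow_zero, Ideal.one_eq_top]
      exact Submodule.mem_top
  | succ n ih =>
      intro a ha
      rw [pow_succ] at ha ⊢
      refine Submodule.mul_induction_on ha ?_ ?_
      · intro x hx y hy
        rw [map_mul]
        exact Ideal.mul_mem_mul (ih x hx) (phi_mem_I hy)
      · intro u v hu hv
        rw [map_add]
        exact Ideal.add_mem _ hu hv

lemma phiPow_mem_pow {a : MonoidAlgebra ℤ R} {n : ℕ} (k : ℕ) (ha : a ∈ (Iideal R) ^ n) :
    phiPow p R k a ∈ (Iideal R) ^ n := by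
  induction k with
  | zero => exact ha
  | succ k ih => exact phi_mem_pow _ ih

lemma phiPow_of (k : ℕ) (r : R) :
    phiPow p R k (MonoidAlgebra.of ℤ R r) = MonoidAlgebra.of ℤ R (r ^ p ^ k) := by
  induction k with
  | zero => simp [phiPow]
  | succ k ih =>
      show phiZR p R (phiPow p R k (MonoidAlgebra.of ℤ R r)) = _
      rw [ih, phiZR_of, ← pow_mul, pow_succ]

lemma phiPow_phi (k : ℕ) (a : MonoidAlgebra ℤ R) :
    phiPow p R k (phiZR p R a) = phiZR p R (phiPow p R k a) := by
  induction k with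
  | zero => rfl
  | succ k ih =>
      show phiZR p R (phiPow p R k (phiZR p R a)) = _
      rw [ih]
      rfl

lemma phiPow_add (k l : ℕ) (a : MonoidAlgebra ℤ R) :
    phiPow p R k (phiPow p R l a) = phiPow p R (k + l) a := by
  induction l with
  | zero => rfl
  | succ l ih =>
      show phiPow p R k (phiZR p R (phiPow p R l a))
        = phiZR p R (phiPow p R (k + l) a)
      rw [phiPow_phi, ih]

lemma p_mem_I : ((p : ℕ) : MonoidAlgebra ℤ R) ∈ Iideal R := by
  rw [mem_I, map_natCast]
  exact CharP.cast_eq_zero R p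

lemma of_zero_mem_I : (MonoidAlgebra.of ℤ R 0) ∈ Iideal R := by
  rw [mem_I, piHom_of]

lemma of_zero_mem_pow {n : ℕ} (hn : 1 ≤ n) :
    (MonoidAlgebra.of ℤ R 0) ∈ (Iideal R) ^ n := by
  have h : (MonoidAlgebra.of ℤ R 0 : MonoidAlgebra ℤ R) ^ n = MonoidAlgebra.of ℤ R 0 := by
    rw [← map_pow, zero_pow (by omega : n ≠ 0)]
  rw [← h]
  exact Ideal.pow_mem_pow of_zero_mem_I n

lemma diff_of_mem (c c' : R) :
    MonoidAlgebra.of ℤ R c + MonoidAlgebra.of ℤ R c' - MonoidAlgebra.of ℤ R (c + c')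
      ∈ Iideal R := by
  rw [mem_I, map_sub, map_add, piHom_of, piHom_of, piHom_of, sub_self]

lemma sub_of_pi_mem (d : MonoidAlgebra ℤ R) :
    d - MonoidAlgebra.of ℤ R (piHom R d) ∈ Iideal R := by
  rw [mem_I, map_sub, piHom_of, sub_self]

/-- Base case of Lemma D: `e ∈ I` implies `φ e ≡ p·[c] mod I²`. -/
lemma D1 (e : MonoidAlgebra ℤ R) (he : e ∈ Iideal R) :
    ∃ c : R, phiZR p R e - (p : MonoidAlgebra ℤ R) * MonoidAlgebra.of ℤ R c
      ∈ (Iideal R) ^ 2 := by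
  obtain ⟨d, hd⟩ := phi_pmod (p := p) e
  refine ⟨piHom R d, ?_⟩
  have h : phiZR p R e - (p : MonoidAlgebra ℤ R) * MonoidAlgebra.of ℤ R (piHom R d)
      = e ^ p + (p : MonoidAlgebra ℤ R) * (d - MonoidAlgebra.of ℤ R (piHom R d)) := by
    rw [hd]; ring
  rw [h]
  refine Ideal.add_mem _ ?_ ?_
  · exact Ideal.pow_le_pow_right (Fact.out : p.Prime).two_le (Ideal.pow_mem_pow he p)
  · have := Ideal.mul_mem_mul (p_mem_I (p := p)) (sub_of_pi_mem d)
    rwa [← pow_two] at this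

/-- Lemma D: for `e ∈ I^(m+1)`, `φ e ≡ p^(m+1)·[c] mod I^(m+2)`. -/
lemma Dlem : ∀ m : ℕ, ∀ e ∈ (Iideal R) ^ (m + 1),
    ∃ c : R, phiZR p R e - (p : MonoidAlgebra ℤ R) ^ (m + 1) * MonoidAlgebra.of ℤ R c
      ∈ (Iideal R) ^ (m + 2) := by
  intro m
  induction m with
  | zero =>
      intro e he
      rw [pow_one] at he
      obtain ⟨c, hc⟩ := D1 (p := p) e he
      exact ⟨c, by rwa [pow_one]⟩
  | succ m ih =>
      intro e he
      rw [pow_succ] at he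
      refine Submodule.mul_induction_on he ?_ ?_
      · intro x hx y hy
        obtain ⟨cx, hcx⟩ := ih x hx
        obtain ⟨cy, hcy⟩ := D1 (p := p) y hy
        refine ⟨cx * cy, ?_⟩
        have key : phiZR p R (x * y)
            - (p : MonoidAlgebra ℤ R) ^ (m + 2) * MonoidAlgebra.of ℤ R (cx * cy)
            = phiZR p R x
                * (phiZR p R y - (p : MonoidAlgebra ℤ R) * MonoidAlgebra.of ℤ R cy)
              + ((p : MonoidAlgebra ℤ R) * MonoidAlgebra.of ℤ R cy)
                * (phiZR p R x
                    - (p : MonoidAlgebra ℤ R) ^ (m + 1) * MonoidAlgebra.of ℤ R cx) := by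
          rw [map_mul, map_mul]
          ring
        rw [key]
        refine Ideal.add_mem _ ?_ ?_
        · have h1 : phiZR p R x ∈ (Iideal R) ^ (m + 1) := phi_mem_pow _ hx
          have h2 := Ideal.mul_mem_mul h1 hcy
          rw [← pow_add] at h2
          exact h2
        · have h1 : (p : MonoidAlgebra ℤ R) * MonoidAlgebra.of ℤ R cy ∈ Iideal R :=
            Ideal.mul_mem_right _ _ (p_mem_I (p := p))
          have h2 := Ideal.mul_mem_mul h1 hcx
          rw [← pow_succ'] at h2
          exact h2
      · intro a b hha hhb
        obtain ⟨c1, hc1⟩ := hha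
        obtain ⟨c2, hc2⟩ := hhb
        refine ⟨c1 + c2, ?_⟩
        have key : phiZR p R (a + b)
            - (p : MonoidAlgebra ℤ R) ^ (m + 2) * MonoidAlgebra.of ℤ R (c1 + c2)
            = (phiZR p R a
                - (p : MonoidAlgebra ℤ R) ^ (m + 2) * MonoidAlgebra.of ℤ R c1)
              + (phiZR p R b
                - (p : MonoidAlgebra ℤ R) ^ (m + 2) * MonoidAlgebra.of ℤ R c2)
              + (p : MonoidAlgebra ℤ R) ^ (m + 2)
                * (MonoidAlgebra.of ℤ R c1 + MonoidAlgebra.of ℤ R c2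
                    - MonoidAlgebra.of ℤ R (c1 + c2)) := by
          rw [map_add]
          ring
        rw [key]
        refine Ideal.add_mem _ (Ideal.add_mem _ hc1 hc2) ?_
        have h1 : ((p : MonoidAlgebra ℤ R)) ^ (m + 2) ∈ (Iideal R) ^ (m + 2) :=
          Ideal.pow_mem_pow (p_mem_I (p := p)) _
        have h2 := Ideal.mul_mem_mul h1 (diff_of_mem c1 c2)
        rw [← pow_succ] at h2
        exact Ideal.pow_le_pow_right (by omega) h2

/-- Lemma E: `φ^m a ≡ Σ_{i<m+1} p^i [x i] mod I^(m+1)`. -/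
lemma Elem : ∀ m : ℕ, ∀ a : MonoidAlgebra ℤ R,
    ∃ x : ℕ → R, phiPow p R m a
      - ∑ i ∈ Finset.range (m + 1),
          (p : MonoidAlgebra ℤ R) ^ i * MonoidAlgebra.of ℤ R (x i)
      ∈ (Iideal R) ^ (m + 1) := by
  intro m
  induction m with
  | zero =>
      intro a
      refine ⟨fun _ => piHom R a, ?_⟩
      have h0 : phiPow p R 0 a = a := rfl
      rw [h0, Finset.sum_range_one, pow_zero, one_mul, pow_one]
      exact sub_of_pi_mem a
  | succ m ih =>
      intro a
      obtain ⟨x, hx⟩ := ih a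
      obtain ⟨c, hc⟩ := Dlem (p := p) m _ hx
      refine ⟨fun i => if i < m + 1 then (x i) ^ p else c, ?_⟩
      have hstep : phiPow p R (m + 1) a = phiZR p R (phiPow p R m a) := rfl
      have hsum : phiZR p R (∑ i ∈ Finset.range (m + 1),
            (p : MonoidAlgebra ℤ R) ^ i * MonoidAlgebra.of ℤ R (x i))
          = ∑ i ∈ Finset.range (m + 1),
            (p : MonoidAlgebra ℤ R) ^ i * MonoidAlgebra.of ℤ R ((x i) ^ p) := by
        rw [map_sum]
        refine Finset.sum_congr rfl ?_
        intro i _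
        rw [map_mul, map_pow, map_natCast, phiZR_of]
      have hsum2 : ∑ i ∈ Finset.range (m + 2), (p : MonoidAlgebra ℤ R) ^ i
            * MonoidAlgebra.of ℤ R (if i < m + 1 then (x i) ^ p else c)
          = (∑ i ∈ Finset.range (m + 1),
              (p : MonoidAlgebra ℤ R) ^ i * MonoidAlgebra.of ℤ R ((x i) ^ p))
            + (p : MonoidAlgebra ℤ R) ^ (m + 1) * MonoidAlgebra.of ℤ R c := by
        rw [Finset.sum_range_succ]
        congr 1
        · refine Finset.sum_congr rfl ?_
          intro i hi
          rw [if_pos (Finset.mem_range.mp hi)]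
        · rw [if_neg (by omega)]
      have key : phiPow p R (m + 1) a
          - ∑ i ∈ Finset.range (m + 2), (p : MonoidAlgebra ℤ R) ^ i
              * MonoidAlgebra.of ℤ R (if i < m + 1 then (x i) ^ p else c)
          = phiZR p R (phiPow p R m a
              - ∑ i ∈ Finset.range (m + 1),
                  (p : MonoidAlgebra ℤ R) ^ i * MonoidAlgebra.of ℤ R (x i))
            - (p : MonoidAlgebra ℤ R) ^ (m + 1) * MonoidAlgebra.of ℤ R c := by
        rw [hsum2, hstep, map_sub, hsum]
        ring
      rw [key]
      exact hc

end CharP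

/-! ### Witt vector lemmas -/

section Witt

variable [CharP R p]

local notation "𝕎" => WittVector p R

lemma iterate_versch_coeff_lt {x : 𝕎} : ∀ i j : ℕ, j < i →
    ((verschiebung^[i] x).coeff j) = 0 := by
  intro i
  induction i with
  | zero => omega
  | succ i ih =>
      intro j hj
      rw [Function.iterate_succ_apply']
      match j with
      | 0 => exact verschiebung_coeff_zero _
      | j + 1 =>
          rw [verschiebung_coeff_succ]
          exact ih j (by omega)

lemma vset_add {m : ℕ} {x y : 𝕎} (hx : ∀ j < m, x.coeff j = 0)
    (hy : ∀ j < m, y.coeff j = 0) : ∀ j < m, (x + y).coeff j = 0 := by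
  intro j hj
  rw [eq_iterate_verschiebung hx, eq_iterate_verschiebung hy,
    ← iterate_map_add (verschiebung : 𝕎 →+ 𝕎) m]
  exact iterate_versch_coeff_lt _ _ hj

lemma vset_mul {m : ℕ} {u v : 𝕎} (hu : u.coeff 0 = 0)
    (hv : ∀ j < m, v.coeff j = 0) : ∀ j < m + 1, (u * v).coeff j = 0 := by
  intro j hj
  have hu1 : ∀ j < 1, u.coeff j = 0 := by
    intro j hj
    interval_cases j
    exact hu
  rw [eq_iterate_verschiebung hu1, eq_iterate_verschiebung hv,
    iterate_verschiebung_mul]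
  exact iterate_versch_coeff_lt _ _ (by omega)

/-- The Teichmüller lift `θ : ℤR → W(R)`. -/
def thetaHom : MonoidAlgebra ℤ R →+* 𝕎 :=
  (MonoidAlgebra.lift ℤ 𝕎 R (WittVector.teichmuller p)).toRingHom

lemma thetaHom_of (r : R) : thetaHom (MonoidAlgebra.of ℤ R r) = WittVector.teichmuller p r := by
  simp [thetaHom]

lemma theta_coeff_zero (a : MonoidAlgebra ℤ R) :
    (thetaHom (p := p) a).coeff 0 = piHom R a := by
  have h : (WittVector.constantCoeff (p := p) (R := R)).comp (thetaHom (p := p) (R := R)) = piHom R := by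
    apply ringHom_ext_of
    intro r
    rw [RingHom.comp_apply, thetaHom_of, piHom_of, WittVector.constantCoeff_apply,
      teichmuller_coeff_zero]
  have h2 := RingHom.congr_fun h a
  rw [RingHom.comp_apply, WittVector.constantCoeff_apply] at h2
  exact h2

/-- Lemma T: `θ(I^m)` has vanishing coefficients below `m`. -/
lemma Tlem : ∀ m : ℕ, ∀ a ∈ (Iideal R) ^ m, ∀ j < m, (thetaHom (p := p) a).coeff j = 0 := by
  intro m
  induction m with
  | zero => omega
  | succ m ih =>
      intro a ha
      rw [pow_succ] at ha
      refine Submodule.mul_induction_on ha ?_ ?_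
      · intro x hx y hy
        have h1 : (thetaHom (p := p) y).coeff 0 = 0 := by
          rw [theta_coeff_zero, ← mem_I]
          exact hy
        have h2 : ∀ j < m, (thetaHom (p := p) x).coeff j = 0 := ih x hx
        intro j hj
        rw [map_mul, mul_comm]
        exact vset_mul h1 h2 j hj
      · intro u v hu hv
        intro j hj
        rw [map_add]
        exact vset_add (fun j hj => hu j hj) (fun j hj => hv j hj) j hj

/-- Lemma C: coefficientwise vanishing of `Σ p^i [y i]` forces `y i = 0`,
when Frobenius is injective. -/
lemma Clem (hFrob : Function.Injective fun x : R => x ^ p) :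
    ∀ m : ℕ, ∀ y : ℕ → R,
      (∀ j < m, (∑ i ∈ Finset.range m,
          (p : 𝕎) ^ i * WittVector.teichmuller p (y i)).coeff j = 0) →
      ∀ i < m, y i = 0 := by
  intro m
  induction m with
  | zero => omega
  | succ m ih =>
      intro y h
      set t : 𝕎 := ∑ i ∈ Finset.range m, (p : 𝕎) ^ i * WittVector.teichmuller p (y (i + 1))
        with ht
      have hsplit : ∑ i ∈ Finset.range (m + 1),
          (p : 𝕎) ^ i * WittVector.teichmuller p (y i)
          = t * (p : 𝕎) + WittVector.teichmuller p (y 0) := by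
        rw [Finset.sum_range_succ']
        refine congrArg₂ (· + ·) ?_ ?_
        · rw [ht, Finset.sum_mul]
          refine Finset.sum_congr rfl ?_
          intro i _
          rw [pow_succ]
          ring
        · rw [pow_zero, one_mul]
      have hy0 : y 0 = 0 := by
        have h0 := h 0 (by omega)
        rw [hsplit, add_coeff_zero, mul_charP_coeff_zero, teichmuller_coeff_zero,
          zero_add] at h0
        exact h0
      have hs : ∑ i ∈ Finset.range (m + 1),
          (p : 𝕎) ^ i * WittVector.teichmuller p (y i) = t * (p : 𝕎) := by
        rw [hsplit, hy0, teichmuller_zero, add_zero]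
      have htc : ∀ j < m, t.coeff j = 0 := by
        intro j hj
        have hj1 := h (j + 1) (by omega)
        rw [hs, mul_charP_coeff_succ] at hj1
        have : t.coeff j ^ p = (0 : R) ^ p := by
          rw [hj1, zero_pow (Fact.out : p.Prime).ne_zero]
        exact hFrob this
      have := ih (fun i => y (i + 1)) htc
      intro i hi
      match i with
      | 0 => exact hy0
      | i + 1 => exact this i (by omega)

/-- Lemma W: if `Σ_{i<m} p^i [y i] ∈ I^m` then all `y i = 0`. -/
lemma Wlem (hFrob : Function.Injective fun x : R => x ^ p) (m : ℕ) (y : ℕ → R)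
    (h : (∑ i ∈ Finset.range m,
        (p : MonoidAlgebra ℤ R) ^ i * MonoidAlgebra.of ℤ R (y i)) ∈ (Iideal R) ^ m) :
    ∀ i < m, y i = 0 := by
  have htheta : thetaHom (p := p) (∑ i ∈ Finset.range m,
      (p : MonoidAlgebra ℤ R) ^ i * MonoidAlgebra.of ℤ R (y i))
      = ∑ i ∈ Finset.range m, (p : 𝕎) ^ i * WittVector.teichmuller p (y i) := by
    rw [map_sum]
    refine Finset.sum_congr rfl ?_
    intro i _
    rw [map_mul, map_pow, map_natCast, thetaHom_of]
  have hv : ∀ j < m, (∑ i ∈ Finset.range m,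
      (p : 𝕎) ^ i * WittVector.teichmuller p (y i)).coeff j = 0 := by
    intro j hj
    rw [← htheta]
    exact Tlem m _ h j hj
  exact Clem hFrob m y hv

end Witt

/-- iterated Frobenius injectivity -/
lemma pow_p_pow_eq_zero {R : Type*} [CommRing R]
    (hFrob : Function.Injective fun x : R => x ^ p) :
    ∀ k : ℕ, ∀ x : R, x ^ p ^ k = 0 → x = 0 := by
  intro k
  induction k with
  | zero => intro x hx; simpa using hx
  | succ k ih =>
      intro x hx
      refine ih x ?_
      have : (x ^ p ^ k) ^ p = (0 : R) ^ p := by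
        rw [← pow_mul, ← pow_succ, hx, zero_pow (Fact.out : p.Prime).ne_zero]
      exact hFrob this

end CD16

open CD16 in
/-- Let `p` be prime and `R` a commutative ring of characteristic `p` whose
Frobenius is injective.  Then for `n ≥ 1`,
`{a ∈ ℤR : φ^{n-1}(a) ∈ I^n} = {a ∈ ℤR : φ^i(a) ∈ I^n for some i ≥ 0}`. -/
theorem statement16 (p : ℕ) [Fact p.Prime] (R : Type*) [CommRing R] [CharP R p]
    (hFrob : Function.Injective fun x : R => x ^ p) (n : ℕ) (hn : 1 ≤ n) :
    ∀ a : MonoidAlgebra ℤ R,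
      phiPow p R (n - 1) a ∈ (Iideal R) ^ n ↔
        ∃ i : ℕ, phiPow p R i a ∈ (Iideal R) ^ n := by
  intro a
  constructor
  · intro h
    exact ⟨n - 1, h⟩
  · rintro ⟨i0, h⟩
    obtain ⟨m, rfl⟩ : ∃ m, n = m + 1 := ⟨n - 1, by omega⟩
    simp only [Nat.add_sub_cancel] at *
    -- E-lemma decomposition
    obtain ⟨x, hx⟩ := Elem (p := p) m a
    set s : MonoidAlgebra ℤ R := ∑ i ∈ Finset.range (m + 1),
      (p : MonoidAlgebra ℤ R) ^ i * MonoidAlgebra.of ℤ R (x i) with hs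
    -- apply φ^{i0}
    have h1 : phiPow p R i0 (phiPow p R m a - s) ∈ (Iideal R) ^ (m + 1) :=
      phiPow_mem_pow i0 hx
    have h2 : phiPow p R i0 (phiPow p R m a) ∈ (Iideal R) ^ (m + 1) := by
      have hc : phiPow p R i0 (phiPow p R m a) = phiPow p R m (phiPow p R i0 a) := by
        rw [phiPow_add, Nat.add_comm, ← phiPow_add]
      rw [hc]
      exact phiPow_mem_pow m h
    have h3 : phiPow p R i0 s ∈ (Iideal R) ^ (m + 1) := by
      have : phiPow p R i0 s
          = phiPow p R i0 (phiPow p R m a) - phiPow p R i0 (phiPow p R m a - s) := by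
        rw [map_sub]
        ring
      rw [this]
      exact Submodule.sub_mem _ h2 h1
    have h4 : phiPow p R i0 s = ∑ i ∈ Finset.range (m + 1),
        (p : MonoidAlgebra ℤ R) ^ i * MonoidAlgebra.of ℤ R ((x i) ^ p ^ i0) := by
      rw [hs, map_sum]
      refine Finset.sum_congr rfl ?_
      intro i _
      rw [map_mul, map_pow, map_natCast, phiPow_of]
    rw [h4] at h3
    have h5 := Wlem hFrob (m + 1) (fun i => (x i) ^ p ^ i0) h3
    have h6 : ∀ i < m + 1, x i = 0 := by
      intro i hi
      exact pow_p_pow_eq_zero hFrob i0 (x i) (h5 i hi)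
    have h7 : s ∈ (Iideal R) ^ (m + 1) := by
      rw [hs]
      refine Ideal.sum_mem _ ?_
      intro i hi
      rw [h6 i (Finset.mem_range.mp hi)]
      exact Ideal.mul_mem_left _ _ (of_zero_mem_pow (by omega))
    have : phiPow p R m a = (phiPow p R m a - s) + s := by ring
    rw [this]
    exact Submodule.add_mem _ hx h7
end
end

section
/- Let p be a prime, k an algebraic closure of 𝔽_p, and 𝔬 = 𝕎 k the ring of p-typical Witt vectors of k (a complete discrete valuation ring with residue field k containing the valuation ring of the maximal unramified extension of ℚ_p). For all positive integers N and m there exist a finite index set I and elements a_i, b_i ∈ 𝔬 (i ∈ I) such that, in the polynomial ring 𝔬[x], ∑_{i ∈ I} (a_i + b_i x)^l ≡ 0 (mod p^N 𝔬[x]) for every l = 1, …, m−1, and ∑_{i ∈ I} (a_i + b_i x)^m ≡ m·x (mod p^N 𝔬[x]). -/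
set_option maxHeartbeats 1000000


open Polynomial Finset

private lemma aux_sum_pow {R : Type*} [CommRing R] [IsDomain R] {ζ : R} {n : ℕ}
    (hζ : IsPrimitiveRoot ζ n) (e : ℕ) :
    ∑ i ∈ range n, ζ ^ (i * e) = if n ∣ e then (n : R) else 0 := by
  have hrw : ∀ i, ζ ^ (i * e) = (ζ ^ e) ^ i := fun i => by rw [← pow_mul, mul_comm]
  simp_rw [hrw]
  split_ifs with h
  · rw [(hζ.pow_eq_one_iff_dvd e).mpr h]
    simp
  · have h1 : ζ ^ e ≠ 1 := fun he => h ((hζ.pow_eq_one_iff_dvd e).mp he)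
    have h2 : (∑ i ∈ range n, (ζ ^ e) ^ i) * (ζ ^ e - 1) = 0 := by
      rw [geom_sum_mul, ← pow_mul, mul_comm e n, pow_mul, hζ.pow_eq_one, one_pow, sub_self]
    rcases mul_eq_zero.mp h2 with h3 | h3
    · exact h3
    · exact absurd (sub_eq_zero.mp h3) h1

private lemma aux_expand {R : Type*} [CommRing R] [IsDomain R] {ζ : R} {n : ℕ}
    (hζ : IsPrimitiveRoot ζ n) (r l : ℕ) :
    ∑ i ∈ range n, (C (ζ ^ i) + C (ζ ^ (i * r)) * X) ^ l
      = ∑ k ∈ range (l + 1),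
          C ((if n ∣ (k + r * (l - k)) then (n : R) else 0) * (l.choose k : R)) * X ^ (l - k) := by
  have step : ∀ i ∈ range n, (C (ζ ^ i) + C (ζ ^ (i * r)) * X) ^ l
      = ∑ k ∈ range (l + 1), C (ζ ^ (i * (k + r * (l - k))) * (l.choose k : R)) * X ^ (l - k) := by
    intro i _
    rw [add_pow]
    refine Finset.sum_congr rfl fun k hk => ?_
    have hexp : ζ ^ (i * (k + r * (l - k))) = ζ ^ (i * k) * ζ ^ (i * r * (l - k)) := by
      rw [← pow_add]
      ring_nf
    rw [mul_pow, ← C_pow, ← C_pow, ← pow_mul, ← pow_mul, ← C_eq_natCast, hexp, C_mul, C_mul]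
    ring
  rw [Finset.sum_congr rfl step, Finset.sum_comm]
  refine Finset.sum_congr rfl fun k hk => ?_
  rw [← aux_sum_pow hζ (k + r * (l - k))]
  simp only [C_mul, map_sum, Finset.sum_mul]

private lemma aux_dvd_iff {n m l k : ℕ} (hm : 0 < m) (hn : m ^ 2 < n)
    (hl1 : 1 ≤ l) (hlm : l ≤ m) (hk : k ≤ l) :
    n ∣ (k + (n - (m - 1)) * (l - k)) ↔ (l = m ∧ l = k + 1) := by
  have hm2 : m ≤ m ^ 2 := by nlinarith
  have hmn : m - 1 ≤ n := by omega
  have key : ((k + (n - (m - 1)) * (l - k) : ℕ) : ℤ)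
      = (n : ℤ) * ((l : ℤ) - k) + ((l : ℤ) - (m : ℤ) * ((l : ℤ) - k)) := by
    push_cast [hmn, hk, hm]
    ring
  rw [← Int.natCast_dvd_natCast, key, dvd_add_right (Dvd.intro _ rfl)]
  constructor
  · intro hd
    have h0 : (l : ℤ) - (m : ℤ) * ((l : ℤ) - k) = 0 := by
      refine Int.eq_zero_of_abs_lt_dvd hd ?_
      have hk' : (k : ℤ) ≤ l := by exact_mod_cast hk
      have hlm' : (l : ℤ) ≤ m := by exact_mod_cast hlm
      have hm' : (1 : ℤ) ≤ m := by exact_mod_cast hm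
      have hn' : (m : ℤ) ^ 2 < n := by exact_mod_cast hn
      rw [abs_lt]
      constructor <;> nlinarith
    have hleq : l = m * (l - k) := by
      have : (l : ℤ) = (m : ℤ) * ((l : ℤ) - k) := by linarith
      have h2 : ((l : ℤ) - k) = ((l - k : ℕ) : ℤ) := by push_cast [hk]; ring
      rw [h2] at this
      exact_mod_cast this
    have hj1 : 1 ≤ l - k := by
      rcases Nat.eq_zero_or_pos (l - k) with h | h
      · rw [h, mul_zero] at hleq; omega
      · exact h
    have hj1' : l - k = 1 := by
      have h1 : m * (l - k) ≤ m * 1 := by rw [mul_one, ← hleq]; exact hlm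
      have := Nat.le_of_mul_le_mul_left h1 hm
      omega
    have hlm2 : l = m := by rw [hleq, hj1', mul_one]
    exact ⟨hlm2, by omega⟩
  · rintro ⟨hl, hk1⟩
    have hc : (l : ℤ) - (k : ℤ) = 1 := by omega
    have hz : (l : ℤ) - (m : ℤ) * ((l : ℤ) - k) = 0 := by rw [hc, mul_one]; omega
    rw [hz]
    exact dvd_zero _

theorem test : True := trivial

/-- **(Zannier's Lemma 1.)**  Let `p` be a prime, `k` an algebraic closure of
`𝔽_p` and `𝔬 = 𝕎 k`.  For all positive integers `N, m` there are a finite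
index set `I` and elements `a_i, b_i ∈ 𝔬` such that in `𝔬[x]` one has
`∑_i (a_i + b_i x)^l ≡ 0 (mod p^N)` for `l = 1, …, m-1` and
`∑_i (a_i + b_i x)^m ≡ m·x (mod p^N)`; congruence mod `p^N 𝔬[x]` means that
all coefficients of the difference are divisible by `p^N` in `𝔬`. -/
theorem statement18 (p : ℕ) [Fact p.Prime] (N m : ℕ) (hN : 0 < N) (hm : 0 < m) :
    ∃ (t : Finset ℕ)
      (a b : ℕ → WittVector p (AlgebraicClosure (ZMod p))),
      (∀ l : ℕ, 1 ≤ l → l ≤ m - 1 → ∀ j : ℕ,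
        (p : WittVector p (AlgebraicClosure (ZMod p))) ^ N ∣
          (∑ i ∈ t, (C (a i) + C (b i) * X) ^ l).coeff j) ∧
      (∀ j : ℕ,
        (p : WittVector p (AlgebraicClosure (ZMod p))) ^ N ∣
          ((∑ i ∈ t, (C (a i) + C (b i) * X) ^ m) -
            (m : Polynomial (WittVector p (AlgebraicClosure (ZMod p)))) * X).coeff j) := by
  set K := AlgebraicClosure (ZMod p) with hK
  set R := WittVector p K with hR
  have hp2 : 2 ≤ p := (Fact.out : p.Prime).two_le
  set n : ℕ := 1 + p ^ N * m ^ 2 with hn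
  have hppow : 1 ≤ p ^ N := Nat.one_le_pow _ _ (by omega)
  have hmul : 1 * m ^ 2 ≤ p ^ N * m ^ 2 := Nat.mul_le_mul_right (m ^ 2) hppow
  have hmm : m ≤ m ^ 2 := by nlinarith
  have hm2n : m ^ 2 < n := by omega
  have hn0 : 0 < n := by omega
  have hnk : ((n : ℕ) : K) ≠ 0 := by
    have hpk : ((p : K)) = 0 := CharP.cast_eq_zero K p
    have : ((n : ℕ) : K) = 1 := by
      rw [hn]
      push_cast
      rw [(CharP.cast_eq_zero_iff K p _).mpr (dvd_mul_of_dvd_left (dvd_pow_self p (by omega)) _), add_zero]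
    rw [this]
    exact one_ne_zero
  haveI : NeZero ((n : ℕ) : K) := ⟨hnk⟩
  obtain ⟨ζ, hζ⟩ := IsAlgClosed.exists_root (cyclotomic n K) (degree_cyclotomic_pos n K hn0).ne.symm
  replace hζ : IsPrimitiveRoot ζ n := isRoot_cyclotomic_iff.mp hζ
  have hζn : IsPrimitiveRoot ζ n := hζ
  have hinj : Function.Injective (WittVector.teichmuller p : K →* R) := by
    intro a b h
    have h0 := congrArg (fun x : R => x.coeff 0) h
    simpa [WittVector.teichmuller_coeff_zero] using h0
  have hζ' : IsPrimitiveRoot (WittVector.teichmuller p ζ : R) n :=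
    hζn.map_of_injective hinj
  set z : R := WittVector.teichmuller p ζ with hz
  set r : ℕ := n - (m - 1) with hr
  refine ⟨range n, fun i => z ^ i, fun i => z ^ (i * r), ?_, ?_⟩
  · intro l hl1 hlm1 j
    have hlm : l ≤ m := le_trans hlm1 (Nat.sub_le _ _)
    rw [aux_expand hζ' r l]
    have hzero : ∀ k ∈ range (l + 1),
        C ((if n ∣ (k + r * (l - k)) then (n : R) else 0) * (l.choose k : R)) * X ^ (l - k)
          = 0 := by
      intro k hk
      rw [if_neg, zero_mul, C_0, zero_mul]
      rw [aux_dvd_iff hm hm2n hl1 hlm (Nat.lt_succ_iff.mp (mem_range.mp hk))]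
      rintro ⟨hlme, -⟩
      omega
    rw [Finset.sum_eq_zero hzero, coeff_zero]
    exact dvd_zero _
  · intro j
    rw [aux_expand hζ' r m]
    have hsum : ∑ k ∈ range (m + 1),
        C ((if n ∣ (k + r * (m - k)) then (n : R) else 0) * (m.choose k : R)) * X ^ (m - k)
          = C ((n : R) * (m : R)) * X := by
      rw [Finset.sum_eq_single (m - 1)]
      · have h1 : m - (m - 1) = 1 := by omega
        have hdvd : n ∣ ((m - 1) + r * (m - (m - 1))) := by
          rw [h1, mul_one]
          have : (m - 1) + r = n := by omega
          rw [this]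
        have hch : m.choose (m - 1) = m := by
          rw [Nat.choose_symm (by omega : 1 ≤ m), Nat.choose_one_right]
        rw [if_pos hdvd, h1, pow_one, hch]
      · intro k hk hne
        rw [if_neg, zero_mul, C_0, zero_mul]
        rw [aux_dvd_iff hm hm2n hm le_rfl (Nat.lt_succ_iff.mp (mem_range.mp hk))]
        rintro ⟨-, hke⟩
        exact hne (by omega)
      · intro habs
        exact absurd (mem_range.mpr (by omega)) habs
    rw [hsum]
    have hdiff : C ((n : R) * (m : R)) * X - (m : R[X]) * X
        = C ((p : R) ^ N * ((m : R) ^ 2 * (m : R))) * X := by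
      rw [← C_eq_natCast, ← sub_mul, ← C_sub]
      have hc : (n : R) * (m : R) - (m : R) = (p : R) ^ N * ((m : R) ^ 2 * (m : R)) := by
        rw [hn]
        push_cast [R, K]
        ring
      rw [hc]
    rw [hdiff]
    simp only [coeff_C_mul, coeff_X]
    split_ifs with h
    · rw [mul_one]
      exact dvd_mul_right _ _
    · rw [mul_zero]
      exact dvd_zero _
end
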